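/- arXiv:2311.03870 — 10 statements merged into one kernel-verified Lean document; each statement's English description precedes it below -/
import Mathlib

section
/- Every discrete quasi-copula Q defined on a finite mesh δ₁×δ₂ ⊆ [0,1]² can be written as Q = α₁C₁ + α₂C₂ where C₁ and C₂ are discrete copulas on the same mesh, α₁ ≥ 1, α₂ ≤ 0, and α₁ + α₂ = 1. -/
open Finset

/-- A mesh on [0,1]: strictly increasing points from 0 to 1. -/
def IsMesh {k : ℕ} (x : Fin (k+2) → ℝ) : Prop :=
  StrictMono x ∧ x 0 = 0 ∧ x (Fin.last (k+1)) = 1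

/-- Volume of a rectangle with vertex indices (i₁,j₁),(i₂,j₂). -/
def VolR {n m : ℕ} (Q : Fin (n+2) → Fin (m+2) → ℝ)
    (i₁ i₂ : Fin (n+2)) (j₁ j₂ : Fin (m+2)) : ℝ :=
  Q i₂ j₂ - Q i₁ j₂ - Q i₂ j₁ + Q i₁ j₁

/-- Volume of the minimal rectangle R_{ij}. -/
def Vol {n m : ℕ} (Q : Fin (n+2) → Fin (m+2) → ℝ)
    (i : Fin (n+1)) (j : Fin (m+1)) : ℝ :=
  VolR Q i.castSucc i.succ j.castSucc j.succ

/-- Discrete copula on the mesh δ₁ × δ₂ given by `x` and `y`. -/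
def IsDiscCopula {n m : ℕ} (x : Fin (n+2) → ℝ) (y : Fin (m+2) → ℝ)
    (C : Fin (n+2) → Fin (m+2) → ℝ) : Prop :=
  (∀ i, C i 0 = 0) ∧ (∀ j, C 0 j = 0) ∧
  (∀ i, C i (Fin.last (m+1)) = x i) ∧ (∀ j, C (Fin.last (n+1)) j = y j) ∧
  (∀ i₁ i₂ j₁ j₂, i₁ ≤ i₂ → j₁ ≤ j₂ → 0 ≤ VolR C i₁ i₂ j₁ j₂)

/-- Discrete quasi-copula on the mesh δ₁ × δ₂ given by `x` and `y`. -/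
def IsDiscQuasiCopula {n m : ℕ} (x : Fin (n+2) → ℝ) (y : Fin (m+2) → ℝ)
    (Q : Fin (n+2) → Fin (m+2) → ℝ) : Prop :=
  (∀ i, Q i 0 = 0) ∧ (∀ j, Q 0 j = 0) ∧
  (∀ i, Q i (Fin.last (m+1)) = x i) ∧ (∀ j, Q (Fin.last (n+1)) j = y j) ∧
  (∀ i₁ i₂ j, i₁ ≤ i₂ → Q i₁ j ≤ Q i₂ j) ∧
  (∀ i j₁ j₂, j₁ ≤ j₂ → Q i j₁ ≤ Q i j₂) ∧
  (∀ i₁ i₂ j₁ j₂, |Q i₂ j₂ - Q i₁ j₁| ≤ |x i₂ - x i₁| + |y j₂ - y j₁|)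

/-- The optimal mass-domination constant α_A. -/
noncomputable def alphaA {n m : ℕ} (x : Fin (n+2) → ℝ) (y : Fin (m+2) → ℝ)
    (A : Fin (n+2) → Fin (m+2) → ℝ) : ℝ :=
  max (⨆ i : Fin (n+1),
        VolR A i.castSucc i.succ 0 (Fin.last (m+1)) / (x i.succ - x i.castSucc))
      (⨆ j : Fin (m+1),
        VolR A 0 (Fin.last (n+1)) j.castSucc j.succ / (y j.succ - y j.castSucc))

/-- The upper bound copula C̄_A. -/
noncomputable def Cbar {n m : ℕ} (x : Fin (n+2) → ℝ) (y : Fin (m+2) → ℝ)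
    (A : Fin (n+2) → Fin (m+2) → ℝ) (i : Fin (n+2)) (j : Fin (m+2)) : ℝ :=
  min (x i - VolR A 0 i j (Fin.last (m+1)) / alphaA x y A)
      (y j - VolR A i (Fin.last (n+1)) 0 j / alphaA x y A)

/-- The lower bound copula C̲_A. -/
noncomputable def Cunder {n m : ℕ} (x : Fin (n+2) → ℝ) (y : Fin (m+2) → ℝ)
    (A : Fin (n+2) → Fin (m+2) → ℝ) (i : Fin (n+2)) (j : Fin (m+2)) : ℝ :=
  max (VolR A 0 i 0 j / alphaA x y A)
      (x i + y j - 1 + VolR A i (Fin.last (n+1)) j (Fin.last (m+1)) / alphaA x y A)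

theorem stmt0 {n m : ℕ} (x : Fin (n+2) → ℝ) (y : Fin (m+2) → ℝ)
    (Q : Fin (n+2) → Fin (m+2) → ℝ)
    (hx : IsMesh x) (hy : IsMesh y) (hQ : IsDiscQuasiCopula x y Q) :
    ∃ (C₁ C₂ : Fin (n+2) → Fin (m+2) → ℝ) (α₁ α₂ : ℝ),
      IsDiscCopula x y C₁ ∧ IsDiscCopula x y C₂ ∧
      1 ≤ α₁ ∧ α₂ ≤ 0 ∧ α₁ + α₂ = 1 ∧
      ∀ i j, Q i j = α₁ * C₁ i j + α₂ * C₂ i j := by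
  obtain ⟨hxm, hx0, hx1⟩ := hx
  obtain ⟨hym, hy0, hy1⟩ := hy
  obtain ⟨q1, q2, q3, q4, q5, q6, q7⟩ := hQ
  set g : ℝ := Finset.univ.inf' Finset.univ_nonempty
      (fun j : Fin (m+1) => y j.succ - y j.castSucc) with hg
  have hgpos : 0 < g := by
    rw [hg, Finset.lt_inf'_iff]
    intro j _
    exact sub_pos.2 (hym (Fin.castSucc_lt_succ : j.castSucc < j.succ))
  set α : ℝ := 1 + 1/g with hα
  have hα1 : 1 < α := by
    have := one_div_pos.2 hgpos
    rw [hα]; linarith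
  have hαpos : (0:ℝ) < α - 1 := by linarith
  -- key inequality: VolR Q ≤ α * Δx * Δy
  have key : ∀ i₁ i₂ j₁ j₂, i₁ ≤ i₂ → j₁ ≤ j₂ →
      VolR Q i₁ i₂ j₁ j₂ ≤ α * ((x i₂ - x i₁) * (y j₂ - y j₁)) := by
    intro i₁ i₂ j₁ j₂ hi hj
    rcases eq_or_lt_of_le hj with h | h
    · subst h
      simp [VolR]
    · -- Δy ≥ g
      have hj1 : (j₁ : ℕ) < m + 1 := by
        have := h
        have h2 : (j₁ : ℕ) < (j₂ : ℕ) := h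
        omega
      set j' : Fin (m+1) := ⟨(j₁ : ℕ), hj1⟩ with hj'
      have hcast : j'.castSucc = j₁ := by ext; rfl
      have hsucc : j'.succ ≤ j₂ := by
        have h2 : (j₁ : ℕ) < (j₂ : ℕ) := h
        show (j' : ℕ) + 1 ≤ (j₂ : ℕ)
        exact h2
      have hgle : g ≤ y j'.succ - y j'.castSucc :=
        Finset.inf'_le _ (Finset.mem_univ j')
      have hdy : g ≤ y j₂ - y j₁ := by
        have := hym.monotone hsucc
        rw [hcast] at hgle
        linarith
      have hdx : 0 ≤ x i₂ - x i₁ := sub_nonneg.2 (hxm.monotone hi)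
      -- VolR Q ≤ Δx
      have l1 : Q i₂ j₂ - Q i₁ j₂ ≤ x i₂ - x i₁ := by
        have h7 := q7 i₁ i₂ j₂ j₂
        have hb := le_trans (le_abs_self _) h7
        rw [sub_self, abs_zero, abs_of_nonneg hdx] at hb
        linarith
      have l2 : Q i₁ j₁ ≤ Q i₂ j₁ := q5 i₁ i₂ j₁ hi
      have hvol : VolR Q i₁ i₂ j₁ j₂ ≤ x i₂ - x i₁ := by
        unfold VolR; linarith
      -- α * Δy ≥ 1
      have hinv : (1/g) * g = 1 := one_div_mul_cancel (ne_of_gt hgpos)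
      have hag : α * g = g + 1 := by
        rw [hα]; field_simp
      have hαy : 1 ≤ α * (y j₂ - y j₁) := by
        have : α * g ≤ α * (y j₂ - y j₁) :=
          mul_le_mul_of_nonneg_left hdy (by linarith)
        linarith
      nlinarith
  refine ⟨fun i j => x i * y j,
      fun i j => (α * (x i * y j) - Q i j) / (α - 1), α, 1 - α, ?_, ?_,
      le_of_lt hα1, by linarith, by ring, ?_⟩
  · refine ⟨fun i => by simp [hy0], fun j => by simp [hx0],
      fun i => by simp [hy1], fun j => by simp [hx1], ?_⟩
    intro i₁ i₂ j₁ j₂ hi hj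
    have hdx : 0 ≤ x i₂ - x i₁ := sub_nonneg.2 (hxm.monotone hi)
    have hdy : 0 ≤ y j₂ - y j₁ := sub_nonneg.2 (hym.monotone hj)
    show (0:ℝ) ≤ x i₂ * y j₂ - x i₁ * y j₂ - x i₂ * y j₁ + x i₁ * y j₁
    nlinarith
  · refine ⟨?_, ?_, ?_, ?_, ?_⟩
    · intro i; simp [hy0, q1]
    · intro j; simp [hx0, q2]
    · intro i
      show (α * (x i * y (Fin.last (m+1))) - Q i (Fin.last (m+1))) / (α - 1) = x i
      rw [hy1, q3]
      have hne : α - 1 ≠ 0 := ne_of_gt hαpos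
      field_simp
    · intro j
      show (α * (x (Fin.last (n+1)) * y j) - Q (Fin.last (n+1)) j) / (α - 1) = y j
      rw [hx1, q4]
      have hne : α - 1 ≠ 0 := ne_of_gt hαpos
      field_simp
    · intro i₁ i₂ j₁ j₂ hi hj
      have hk := key i₁ i₂ j₁ j₂ hi hj
      have : VolR (fun i j => (α * (x i * y j) - Q i j) / (α - 1)) i₁ i₂ j₁ j₂
          = (α * ((x i₂ - x i₁) * (y j₂ - y j₁)) - VolR Q i₁ i₂ j₁ j₂) / (α - 1) := by
        have hne : α - 1 ≠ 0 := ne_of_gt hαpos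
        unfold VolR
        field_simp
        ring
      rw [this]
      exact div_nonneg (by linarith) (le_of_lt hαpos)
  · intro i j
    have hne : α - 1 ≠ 0 := ne_of_gt hαpos
    field_simp
    ring
end

section
/- Let Q be a discrete quasi-copula on a finite mesh and let α₁ = max_{i,j} V_Q(R_{ij})/λ²(R_{ij}) over all minimal rectangles R_{ij} of the mesh, where λ² is Lebesgue area. Then α₁ ≥ 1, and if α₁ = 1 then Q equals the restriction of the product copula Π(x,y) = xy to the mesh. -/
open Finset

lemma tel {k : ℕ} (f : Fin (k+1) → ℝ) :
    ∑ i : Fin k, (f i.succ - f i.castSucc) = f (Fin.last k) - f 0 := by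
  induction k with
  | zero => simp [Fin.last]
  | succ k ih =>
    rw [Fin.sum_univ_castSucc]
    have h := ih (fun j => f j.castSucc)
    simp only [Fin.castSucc_zero] at h
    simp only [Fin.succ_castSucc, h, Fin.succ_last]
    ring

theorem stmt1 {n m : ℕ} (x : Fin (n+2) → ℝ) (y : Fin (m+2) → ℝ)
    (Q : Fin (n+2) → Fin (m+2) → ℝ)
    (hx : IsMesh x) (hy : IsMesh y) (hQ : IsDiscQuasiCopula x y Q)
    (α₁ : ℝ)
    (hα : α₁ = ⨆ p : Fin (n+1) × Fin (m+1),
        Vol Q p.1 p.2 /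
          ((x p.1.succ - x p.1.castSucc) * (y p.2.succ - y p.2.castSucc))) :
    1 ≤ α₁ ∧ (α₁ = 1 → ∀ i j, Q i j = x i * y j) := by
  obtain ⟨hxm, hx0, hx1⟩ := hx
  obtain ⟨hym, hy0, hy1⟩ := hy
  obtain ⟨hq0, hq0', hqx, hqy, -, -, -⟩ := hQ
  set A : Fin (n+1) × Fin (m+1) → ℝ := fun p =>
    (x p.1.succ - x p.1.castSucc) * (y p.2.succ - y p.2.castSucc) with hA
  set r : Fin (n+1) × Fin (m+1) → ℝ := fun p => Vol Q p.1 p.2 / A p with hr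
  have harea : ∀ p : Fin (n+1) × Fin (m+1), 0 < A p := by
    intro p
    exact mul_pos (sub_pos.2 (hxm Fin.castSucc_lt_succ))
      (sub_pos.2 (hym Fin.castSucc_lt_succ))
  have hle : ∀ p, r p ≤ α₁ := by
    intro p; rw [hα]; exact le_ciSup (Finite.bddAbove_range r) p
  have hVle : ∀ p, Vol Q p.1 p.2 ≤ α₁ * A p := by
    intro p
    have := hle p
    rw [hr, div_le_iff₀ (harea p)] at this
    linarith [this]
  have hsumVol : ∑ p : Fin (n+1) × Fin (m+1), Vol Q p.1 p.2 = 1 := by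
    rw [Fintype.sum_prod_type]
    have inner : ∀ i : Fin (n+1), ∑ j : Fin (m+1), Vol Q i j = x i.succ - x i.castSucc := by
      intro i
      calc ∑ j : Fin (m+1), Vol Q i j
          = ∑ j : Fin (m+1), ((fun j => Q i.succ j - Q i.castSucc j) j.succ -
              (fun j => Q i.succ j - Q i.castSucc j) j.castSucc) := by
            apply Finset.sum_congr rfl
            intro j _
            simp only [Vol, VolR]
            ring
        _ = (fun j => Q i.succ j - Q i.castSucc j) (Fin.last (m+1)) -
              (fun j => Q i.succ j - Q i.castSucc j) 0 :=
            tel (fun j => Q i.succ j - Q i.castSucc j)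
        _ = x i.succ - x i.castSucc := by simp [hqx, hq0]
    have h2 : ∑ i : Fin (n+1), (x i.succ - x i.castSucc) = 1 := by
      rw [tel x, hx1, hx0]; ring
    calc ∑ i : Fin (n+1), ∑ j : Fin (m+1), Vol Q i j
        = ∑ i : Fin (n+1), (x i.succ - x i.castSucc) := Finset.sum_congr rfl (fun i _ => inner i)
      _ = 1 := h2
  have hsumA : ∑ p : Fin (n+1) × Fin (m+1), A p = 1 := by
    rw [Fintype.sum_prod_type]
    have step : ∀ i : Fin (n+1), ∑ j : Fin (m+1), A (i, j) =
        (x i.succ - x i.castSucc) * ∑ j : Fin (m+1), (y j.succ - y j.castSucc) := by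
      intro i; rw [Finset.mul_sum]
    rw [Finset.sum_congr rfl (fun i _ => step i), ← Finset.sum_mul, tel x, tel y,
      hx0, hx1, hy0, hy1]
    ring
  have h1le : 1 ≤ α₁ := by
    calc (1:ℝ) = ∑ p : Fin (n+1) × Fin (m+1), Vol Q p.1 p.2 := hsumVol.symm
      _ ≤ ∑ p : Fin (n+1) × Fin (m+1), α₁ * A p := Finset.sum_le_sum (fun p _ => hVle p)
      _ = α₁ * ∑ p : Fin (n+1) × Fin (m+1), A p := by rw [Finset.mul_sum]
      _ = α₁ := by rw [hsumA, mul_one]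
  refine ⟨h1le, fun hone => ?_⟩
  have hVeq : ∀ p : Fin (n+1) × Fin (m+1), Vol Q p.1 p.2 = A p := by
    have hz : ∑ p : Fin (n+1) × Fin (m+1), (A p - Vol Q p.1 p.2) = 0 := by
      rw [Finset.sum_sub_distrib, hsumVol, hsumA]; ring
    have hnn : ∀ p ∈ (Finset.univ : Finset (Fin (n+1) × Fin (m+1))),
        0 ≤ A p - Vol Q p.1 p.2 := by
      intro p _
      have := hVle p
      rw [hone, one_mul] at this
      linarith
    intro p
    have := (Finset.sum_eq_zero_iff_of_nonneg hnn).1 hz p (Finset.mem_univ p)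
    linarith
  intro i
  induction i using Fin.induction with
  | zero => intro j; simp [hq0', hx0]
  | succ i ih =>
    intro j
    induction j using Fin.induction with
    | zero => simp [hq0, hy0]
    | succ j ihj =>
      have hv := hVeq (i, j)
      simp only [Vol, VolR, hA] at hv
      have e1 := ih j.succ
      have e2 := ih j.castSucc
      linear_combination hv + e1 + ihj - e2
end

section
/- Let A: δ₁×δ₂ → ℝ be a nonzero grounded 2-increasing function on a finite mesh, and define α_A = max over all i,j of { V_A([x_i,x_{i+1}]×[0,1])/(x_{i+1}−x_i), V_A([0,1]×[y_j,y_{j+1}])/(y_{j+1}−y_j) }. Then the function C̄_A(x,y) = min{ x − V_A([0,x]×[y,1])/α_A , y − V_A([x,1]×[0,y])/α_A } defined on δ₁×δ₂ is a discrete copula. -/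
open Finset

lemma min_vol_aux {f00 f01 f10 f11 g00 g01 g10 g11 : ℝ}
    (hf : 0 ≤ f11 - f01 - f10 + f00) (hg : 0 ≤ g11 - g01 - g10 + g00)
    (he1 : 0 ≤ (f11 - g11) - (f01 - g01)) (he0 : 0 ≤ (f10 - g10) - (f00 - g00))
    (hd1 : (f11 - g11) - (f10 - g10) ≤ 0) (hd0 : (f01 - g01) - (f00 - g00) ≤ 0) :
    0 ≤ min f11 g11 - min f01 g01 - min f10 g10 + min f00 g00 := by
  simp only [min_def]
  split_ifs <;> linarith

theorem stmt3 {n m : ℕ} (x : Fin (n+2) → ℝ) (y : Fin (m+2) → ℝ)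
    (A : Fin (n+2) → Fin (m+2) → ℝ)
    (hx : IsMesh x) (hy : IsMesh y)
    (hg1 : ∀ i, A i 0 = 0) (hg2 : ∀ j, A 0 j = 0)
    (h2inc : ∀ i₁ i₂ j₁ j₂, i₁ ≤ i₂ → j₁ ≤ j₂ → 0 ≤ VolR A i₁ i₂ j₁ j₂)
    (hne : ∃ i j, A i j ≠ 0) :
    IsDiscCopula x y (Cbar x y A) := by
  obtain ⟨hxm, hx0, hx1⟩ := hx
  obtain ⟨hym, hy0, hy1⟩ := hy
  set α := alphaA x y A with hαdef
  have hΔx : ∀ i : Fin (n+1), 0 < x i.succ - x i.castSucc :=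
    fun i => sub_pos.mpr (hxm ((Fin.castSucc_lt_succ : Fin.castSucc i < i.succ)))
  have hΔy : ∀ j : Fin (m+1), 0 < y j.succ - y j.castSucc :=
    fun j => sub_pos.mpr (hym ((Fin.castSucc_lt_succ : Fin.castSucc j < j.succ)))
  have hax : ∀ i : Fin (n+1),
      VolR A i.castSucc i.succ 0 (Fin.last (m+1)) ≤ α * (x i.succ - x i.castSucc) := by
    intro i
    have h1 : VolR A i.castSucc i.succ 0 (Fin.last (m+1)) / (x i.succ - x i.castSucc) ≤ α :=
      le_trans (le_ciSup (f := fun i : Fin (n+1) =>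
        VolR A i.castSucc i.succ 0 (Fin.last (m+1)) / (x i.succ - x i.castSucc))
        (Set.Finite.bddAbove (Set.finite_range _)) i) (le_max_left _ _)
    have := (div_le_iff₀ (hΔx i)).mp h1
    linarith
  have hay : ∀ j : Fin (m+1),
      VolR A 0 (Fin.last (n+1)) j.castSucc j.succ ≤ α * (y j.succ - y j.castSucc) := by
    intro j
    have h1 : VolR A 0 (Fin.last (n+1)) j.castSucc j.succ / (y j.succ - y j.castSucc) ≤ α :=
      le_trans (le_ciSup (f := fun j : Fin (m+1) =>
        VolR A 0 (Fin.last (n+1)) j.castSucc j.succ / (y j.succ - y j.castSucc))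
        (Set.Finite.bddAbove (Set.finite_range _)) j) (le_max_right _ _)
    have := (div_le_iff₀ (hΔy j)).mp h1
    linarith
  have hAll : 0 < A (Fin.last (n+1)) (Fin.last (m+1)) := by
    obtain ⟨i, j, hij⟩ := hne
    have h0 := h2inc 0 i 0 j (Fin.zero_le i) (Fin.zero_le j)
    have h1 := h2inc i (Fin.last (n+1)) j (Fin.last (m+1)) (Fin.le_last i) (Fin.le_last j)
    have h2 := h2inc 0 i j (Fin.last (m+1)) (Fin.zero_le i) (Fin.le_last j)
    have h3 := h2inc i (Fin.last (n+1)) 0 j (Fin.le_last i) (Fin.zero_le j)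
    simp only [VolR, hg1, hg2] at h0 h1 h2 h3
    rcases lt_or_eq_of_le (by linarith : (0:ℝ) ≤ A i j) with h | h
    · linarith
    · exact absurd h.symm hij
  have hα : 0 < α := by
    by_contra hcon
    push_neg at hcon
    have hmono : Monotone (fun i : Fin (n+2) => - A i (Fin.last (m+1))) := by
      rw [Fin.monotone_iff_le_succ]
      intro i
      have h1 := hax i
      have h2 := h2inc i.castSucc i.succ 0 (Fin.last (m+1)) (le_of_lt ((Fin.castSucc_lt_succ : Fin.castSucc i < i.succ)))
        (Fin.zero_le _)
      have h3 : α * (x i.succ - x i.castSucc) ≤ 0 :=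
        mul_nonpos_of_nonpos_of_nonneg hcon (le_of_lt (hΔx i))
      simp only [VolR, hg1] at h1 h2
      linarith
    have := hmono (Fin.zero_le (Fin.last (n+1)))
    simp only [hg2] at this
    linarith
  have hu : Monotone (fun i : Fin (n+2) => α * x i - A i (Fin.last (m+1))) := by
    rw [Fin.monotone_iff_le_succ]
    intro i
    have h1 := hax i
    simp only [VolR, hg1] at h1
    linarith [mul_sub α (x i.succ) (x i.castSucc)]
  have hv : Monotone (fun j : Fin (m+2) => α * y j - A (Fin.last (n+1)) j) := by
    rw [Fin.monotone_iff_le_succ]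
    intro j
    have h1 := hay j
    simp only [VolR, hg2] at h1
    linarith [mul_sub α (y j.succ) (y j.castSucc)]
  have hu0 : ∀ i, 0 ≤ α * x i - A i (Fin.last (m+1)) := by
    intro i
    have := hu (Fin.zero_le i)
    simp only [hx0, hg2, mul_zero, sub_zero] at this
    linarith
  have hu1 : ∀ i, α * x i - A i (Fin.last (m+1)) ≤ α - A (Fin.last (n+1)) (Fin.last (m+1)) := by
    intro i
    have := hu (Fin.le_last i)
    simpa [hx1] using this
  have hv0 : ∀ j, 0 ≤ α * y j - A (Fin.last (n+1)) j := by
    intro j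
    have := hv (Fin.zero_le j)
    simp only [hy0, hg1, mul_zero, sub_zero] at this
    linarith
  have hv1 : ∀ j, α * y j - A (Fin.last (n+1)) j ≤ α - A (Fin.last (n+1)) (Fin.last (m+1)) := by
    intro j
    have := hv (Fin.le_last j)
    simpa [hy1] using this
  refine ⟨?_, ?_, ?_, ?_, ?_⟩
  · -- C i 0 = 0
    intro i
    have e1 : VolR A 0 i 0 (Fin.last (m+1)) = A i (Fin.last (m+1)) := by
      simp only [VolR, hg1, hg2]; ring
    have e2 : VolR A i (Fin.last (n+1)) 0 0 = 0 := by
      simp only [VolR]; ring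
    simp only [Cbar, ← hαdef, e1, e2, hy0, zero_div, sub_zero]
    apply min_eq_right
    rw [sub_nonneg, div_le_iff₀ hα]
    linarith [hu0 i]
  · -- C 0 j = 0
    intro j
    have e1 : VolR A 0 0 j (Fin.last (m+1)) = 0 := by
      simp only [VolR]; ring
    have e2 : VolR A 0 (Fin.last (n+1)) 0 j = A (Fin.last (n+1)) j := by
      simp only [VolR, hg1, hg2]; ring
    simp only [Cbar, ← hαdef, e1, e2, hx0, zero_div, sub_zero]
    apply min_eq_left
    rw [sub_nonneg, div_le_iff₀ hα]
    linarith [hv0 j]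
  · -- C i last = x i
    intro i
    have e1 : VolR A 0 i (Fin.last (m+1)) (Fin.last (m+1)) = 0 := by
      simp only [VolR]; ring
    have e2 : VolR A i (Fin.last (n+1)) 0 (Fin.last (m+1)) =
        A (Fin.last (n+1)) (Fin.last (m+1)) - A i (Fin.last (m+1)) := by
      simp only [VolR, hg1]; ring
    simp only [Cbar, ← hαdef, e1, e2, hy1, zero_div, sub_zero]
    apply min_eq_left
    have hd : (A (Fin.last (n+1)) (Fin.last (m+1)) - A i (Fin.last (m+1))) / α ≤ 1 - x i := by
      rw [div_le_iff₀ hα]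
      have := hu1 i
      nlinarith
    linarith
  · -- C last j = y j
    intro j
    have e1 : VolR A 0 (Fin.last (n+1)) j (Fin.last (m+1)) =
        A (Fin.last (n+1)) (Fin.last (m+1)) - A (Fin.last (n+1)) j := by
      simp only [VolR, hg2]; ring
    have e2 : VolR A (Fin.last (n+1)) (Fin.last (n+1)) 0 j = 0 := by
      simp only [VolR]; ring
    simp only [Cbar, ← hαdef, e1, e2, hx1, zero_div, sub_zero]
    apply min_eq_right
    have hd : (A (Fin.last (n+1)) (Fin.last (m+1)) - A (Fin.last (n+1)) j) / α ≤ 1 - y j := by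
      rw [div_le_iff₀ hα]
      have := hv1 j
      nlinarith
    linarith
  · -- 2-increasing
    have hcell : ∀ (i : Fin (n+1)) (j : Fin (m+1)),
        0 ≤ VolR (Cbar x y A) i.castSucc i.succ j.castSucc j.succ := by
      intro i j
      have hfA : 0 ≤ VolR A i.castSucc i.succ j.castSucc j.succ / α :=
        div_nonneg (h2inc _ _ _ _ (le_of_lt ((Fin.castSucc_lt_succ : Fin.castSucc i < i.succ)))
          (le_of_lt ((Fin.castSucc_lt_succ : Fin.castSucc j < j.succ)))) hα.le
      have hex : VolR A i.castSucc i.succ 0 (Fin.last (m+1)) / α ≤ x i.succ - x i.castSucc := by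
        rw [div_le_iff₀ hα]; linarith [hax i]
      have hey : VolR A 0 (Fin.last (n+1)) j.castSucc j.succ / α ≤ y j.succ - y j.castSucc := by
        rw [div_le_iff₀ hα]; linarith [hay j]
      simp only [VolR] at hfA hex hey
      simp only [VolR, Cbar, ← hαdef]
      apply min_vol_aux
      · ring_nf
        ring_nf at hfA
        linarith
      · ring_nf
        ring_nf at hfA
        linarith
      · ring_nf
        ring_nf at hex
        linarith
      · ring_nf
        ring_nf at hex
        linarith
      · ring_nf
        ring_nf at hey
        linarith
      · ring_nf
        ring_nf at hey
        linarith
    have hcol : ∀ (i : Fin (n+1)) (j₁ j₂ : Fin (m+2)), j₁ ≤ j₂ →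
        0 ≤ VolR (Cbar x y A) i.castSucc i.succ j₁ j₂ := by
      intro i j₁ j₂ hj
      have hm : Monotone (fun j => Cbar x y A i.succ j - Cbar x y A i.castSucc j) := by
        rw [Fin.monotone_iff_le_succ]
        intro j
        have h1 := hcell i j
        simp only [VolR] at h1
        show Cbar x y A i.succ j.castSucc - Cbar x y A i.castSucc j.castSucc ≤
          Cbar x y A i.succ j.succ - Cbar x y A i.castSucc j.succ
        linarith
      have h2 : Cbar x y A i.succ j₁ - Cbar x y A i.castSucc j₁ ≤
          Cbar x y A i.succ j₂ - Cbar x y A i.castSucc j₂ := hm hj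
      simp only [VolR]
      linarith
    intro i₁ i₂ j₁ j₂ hi hj
    have hm2 : Monotone (fun i => Cbar x y A i j₂ - Cbar x y A i j₁) := by
      rw [Fin.monotone_iff_le_succ]
      intro i
      have h1 := hcol i j₁ j₂ hj
      simp only [VolR] at h1
      show Cbar x y A i.castSucc j₂ - Cbar x y A i.castSucc j₁ ≤
        Cbar x y A i.succ j₂ - Cbar x y A i.succ j₁
      linarith
    have h2 : Cbar x y A i₁ j₂ - Cbar x y A i₁ j₁ ≤
        Cbar x y A i₂ j₂ - Cbar x y A i₂ j₁ := hm2 hi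
    simp only [VolR]
    linarith
end

section
/- Let A: δ₁×δ₂ → ℝ be a nonzero grounded 2-increasing function on a finite mesh, and define α_A = max over all i,j of { V_A([x_i,x_{i+1}]×[0,1])/(x_{i+1}−x_i), V_A([0,1]×[y_j,y_{j+1}])/(y_{j+1}−y_j) }. Then the function C̲_A(x,y) = max{ V_A([0,x]×[0,y])/α_A , x + y − 1 + V_A([x,1]×[y,1])/α_A } defined on δ₁×δ₂ is a discrete copula. -/
open Finset

lemma max_vol_aux {n m : ℕ} (f g : Fin (n+2) → Fin (m+2) → ℝ)
    (u : Fin (n+2) → ℝ) (v : Fin (m+2) → ℝ)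
    (hu : Monotone u) (hv : Monotone v)
    (hw : ∀ i j, g i j - f i j = u i + v j)
    (hf : ∀ i₁ i₂ j₁ j₂, i₁ ≤ i₂ → j₁ ≤ j₂ → 0 ≤ VolR f i₁ i₂ j₁ j₂)
    (hg : ∀ i₁ i₂ j₁ j₂, i₁ ≤ i₂ → j₁ ≤ j₂ → 0 ≤ VolR g i₁ i₂ j₁ j₂) :
    ∀ i₁ i₂ j₁ j₂, i₁ ≤ i₂ → j₁ ≤ j₂ →
      0 ≤ VolR (fun i j => max (f i j) (g i j)) i₁ i₂ j₁ j₂ := by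
  intro i₁ i₂ j₁ j₂ h1 h2
  have Hf := hf i₁ i₂ j₁ j₂ h1 h2
  have Hg := hg i₁ i₂ j₁ j₂ h1 h2
  have w11 := hw i₁ j₁
  have w12 := hw i₁ j₂
  have w21 := hw i₂ j₁
  have w22 := hw i₂ j₂
  have hu' := hu h1
  have hv' := hv h2
  simp only [VolR, Hf, Hg] at *
  rcases le_total (g i₁ j₂) (f i₁ j₂) with ha | ha <;>
    rcases le_total (g i₂ j₁) (f i₂ j₁) with hb | hb
  · rw [max_eq_left ha, max_eq_left hb]
    have := le_max_left (f i₂ j₂) (g i₂ j₂)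
    have := le_max_left (f i₁ j₁) (g i₁ j₁)
    linarith
  · have hc : f i₂ j₂ ≤ g i₂ j₂ := by linarith
    rw [max_eq_left ha, max_eq_right hb, max_eq_right hc]
    have := le_max_left (f i₁ j₁) (g i₁ j₁)
    linarith
  · have hc : f i₂ j₂ ≤ g i₂ j₂ := by linarith
    rw [max_eq_right ha, max_eq_left hb, max_eq_right hc]
    have := le_max_left (f i₁ j₁) (g i₁ j₁)
    linarith
  · rw [max_eq_right ha, max_eq_right hb]
    have := le_max_right (f i₂ j₂) (g i₂ j₂)
    have := le_max_right (f i₁ j₁) (g i₁ j₁)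
    linarith

theorem stmt4 {n m : ℕ} (x : Fin (n+2) → ℝ) (y : Fin (m+2) → ℝ)
    (A : Fin (n+2) → Fin (m+2) → ℝ)
    (hx : IsMesh x) (hy : IsMesh y)
    (hg1 : ∀ i, A i 0 = 0) (hg2 : ∀ j, A 0 j = 0)
    (h2inc : ∀ i₁ i₂ j₁ j₂, i₁ ≤ i₂ → j₁ ≤ j₂ → 0 ≤ VolR A i₁ i₂ j₁ j₂)
    (hne : ∃ i j, A i j ≠ 0) :
    IsDiscCopula x y (Cunder x y A) := by
  set α : ℝ := alphaA x y A with hα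
  have hcol : ∀ i : Fin (n+1),
      A i.succ (Fin.last (m+1)) - A i.castSucc (Fin.last (m+1))
        ≤ α * (x i.succ - x i.castSucc) := by
    intro i
    have hd : 0 < x i.succ - x i.castSucc := sub_pos.2 (hx.1 Fin.castSucc_lt_succ)
    have h1 : VolR A i.castSucc i.succ 0 (Fin.last (m+1)) / (x i.succ - x i.castSucc) ≤ α := by
      refine le_trans ?_ (le_max_left _ _)
      exact le_ciSup (Set.Finite.bddAbove (Set.finite_range
        (fun i : Fin (n+1) =>
          VolR A i.castSucc i.succ 0 (Fin.last (m+1)) / (x i.succ - x i.castSucc)))) i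
    have h2 : VolR A i.castSucc i.succ 0 (Fin.last (m+1))
        = A i.succ (Fin.last (m+1)) - A i.castSucc (Fin.last (m+1)) := by
      simp [VolR, hg1]
    rw [h2, div_le_iff₀ hd] at h1
    linarith
  have hrow : ∀ j : Fin (m+1),
      A (Fin.last (n+1)) j.succ - A (Fin.last (n+1)) j.castSucc
        ≤ α * (y j.succ - y j.castSucc) := by
    intro j
    have hd : 0 < y j.succ - y j.castSucc := sub_pos.2 (hy.1 Fin.castSucc_lt_succ)
    have h1 : VolR A 0 (Fin.last (n+1)) j.castSucc j.succ / (y j.succ - y j.castSucc) ≤ α := by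
      refine le_trans ?_ (le_max_right _ _)
      exact le_ciSup (Set.Finite.bddAbove (Set.finite_range
        (fun j : Fin (m+1) =>
          VolR A 0 (Fin.last (n+1)) j.castSucc j.succ / (y j.succ - y j.castSucc)))) j
    have h2 : VolR A 0 (Fin.last (n+1)) j.castSucc j.succ
        = A (Fin.last (n+1)) j.succ - A (Fin.last (n+1)) j.castSucc := by
      simp [VolR, hg2]
    rw [h2, div_le_iff₀ hd] at h1
    linarith
  have hu : Monotone (fun i => α * x i - A i (Fin.last (m+1))) := by
    rw [Fin.monotone_iff_le_succ]
    intro i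
    have := hcol i
    linarith
  have hv : Monotone (fun j => α * y j - A (Fin.last (n+1)) j) := by
    rw [Fin.monotone_iff_le_succ]
    intro j
    have := hrow j
    linarith
  have hAmax : 0 < A (Fin.last (n+1)) (Fin.last (m+1)) := by
    obtain ⟨i, j, hij⟩ := hne
    have h1 : 0 ≤ A i j := by
      have := h2inc 0 i 0 j (Fin.zero_le _) (Fin.zero_le _)
      simp only [VolR, hg1, hg2] at this
      linarith
    have h3 : A i j ≤ A i (Fin.last (m+1)) := by
      have h3 := h2inc 0 i j (Fin.last (m+1)) (Fin.zero_le _) (Fin.le_last _)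
      simp only [VolR, hg2] at h3
      linarith
    have h4 : A i (Fin.last (m+1)) ≤ A (Fin.last (n+1)) (Fin.last (m+1)) := by
      have h4 := h2inc i (Fin.last (n+1)) 0 (Fin.last (m+1)) (Fin.le_last _) (Fin.zero_le _)
      simp only [VolR, hg1] at h4
      linarith
    have : 0 < A i j := lt_of_le_of_ne h1 (Ne.symm hij)
    linarith
  have hαpos : 0 < α := by
    by_contra h
    push_neg at h
    have hanti : Antitone (fun i => A i (Fin.last (m+1))) := by
      rw [Fin.antitone_iff_succ_le]
      intro i
      have h1 := hcol i
      have hd : 0 < x i.succ - x i.castSucc := sub_pos.2 (hx.1 Fin.castSucc_lt_succ)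
      have h2 : α * (x i.succ - x i.castSucc) ≤ 0 := mul_nonpos_of_nonpos_of_nonneg h hd.le
      linarith
    have h1 : A (Fin.last (n+1)) (Fin.last (m+1)) ≤ A 0 (Fin.last (m+1)) :=
      hanti (Fin.zero_le _)
    rw [hg2] at h1
    linarith
  have hu0 : ∀ i, A i (Fin.last (m+1)) ≤ α * x i := by
    intro i
    have := hu (Fin.zero_le i)
    simp only [hx.2.1, hg2, mul_zero] at this
    linarith
  have hu1 : ∀ i, A (Fin.last (n+1)) (Fin.last (m+1)) - A i (Fin.last (m+1))
      ≤ α * (1 - x i) := by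
    intro i
    have := hu (Fin.le_last i)
    simp only [hx.2.2, mul_one] at this
    rw [mul_sub, mul_one]
    linarith
  have hv0 : ∀ j, A (Fin.last (n+1)) j ≤ α * y j := by
    intro j
    have := hv (Fin.zero_le j)
    simp only [hy.2.1, hg1, mul_zero] at this
    linarith
  have hv1 : ∀ j, A (Fin.last (n+1)) (Fin.last (m+1)) - A (Fin.last (n+1)) j
      ≤ α * (1 - y j) := by
    intro j
    have := hv (Fin.le_last j)
    simp only [hy.2.2, mul_one] at this
    rw [mul_sub, mul_one]
    linarith
  set f : Fin (n+2) → Fin (m+2) → ℝ := fun i j => A i j / α with hf_def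
  set g : Fin (n+2) → Fin (m+2) → ℝ :=
    fun i j => x i + y j - 1 + VolR A i (Fin.last (n+1)) j (Fin.last (m+1)) / α with hg_def
  have hCeq : ∀ i j, Cunder x y A i j = max (f i j) (g i j) := by
    intro i j
    have h0 : VolR A 0 i 0 j = A i j := by simp [VolR, hg1, hg2]
    simp only [Cunder, hf_def, hg_def, ← hα, h0]
  refine ⟨?_, ?_, ?_, ?_, ?_⟩
  · intro i
    rw [hCeq]
    have h1 : f i 0 = 0 := by simp [hf_def, hg1]
    have h2 : g i 0 ≤ 0 := by
      have h3 : (A (Fin.last (n+1)) (Fin.last (m+1)) - A i (Fin.last (m+1))) / α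
          ≤ 1 - x i := by
        rw [div_le_iff₀ hαpos]
        nlinarith [hu1 i]
      simp only [hg_def, VolR, hg1, hy.2.1, sub_zero, add_zero]
      linarith
    rw [max_eq_left (h1 ▸ h2), h1]
  · intro j
    rw [hCeq]
    have h1 : g 0 j ≤ 0 := by
      have h3 : (A (Fin.last (n+1)) (Fin.last (m+1)) - A (Fin.last (n+1)) j) / α
          ≤ 1 - y j := by
        rw [div_le_iff₀ hαpos]
        nlinarith [hv1 j]
      simp only [hg_def, VolR, hg2, hx.2.1, sub_zero, add_zero, zero_add]
      linarith
    have h2 : f 0 j = 0 := by simp [hf_def, hg2]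
    rw [max_eq_left (h2 ▸ h1), h2]
  · intro i
    rw [hCeq]
    have h1 : g i (Fin.last (m+1)) = x i := by
      simp only [hg_def, VolR, hy.2.2]
      ring
    have h2 : f i (Fin.last (m+1)) ≤ x i := by
      simp only [hf_def]
      rw [div_le_iff₀ hαpos]
      nlinarith [hu0 i]
    rw [max_eq_right (h1 ▸ h2), h1]
  · intro j
    rw [hCeq]
    have h1 : g (Fin.last (n+1)) j = y j := by
      simp only [hg_def, VolR, hx.2.2]
      ring
    have h2 : f (Fin.last (n+1)) j ≤ y j := by
      simp only [hf_def]
      rw [div_le_iff₀ hαpos]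
      nlinarith [hv0 j]
    rw [max_eq_right (h1 ▸ h2), h1]
  · have hres := max_vol_aux f g
      (fun i => (α * x i - A i (Fin.last (m+1))) / α)
      (fun j => (α * y j - A (Fin.last (n+1)) j) / α
        + (A (Fin.last (n+1)) (Fin.last (m+1)) / α - 1))
      (Monotone.div_const hu hαpos.le)
      (Monotone.add_const (Monotone.div_const hv hαpos.le) _)
      (by
        intro i j
        simp only [hf_def, hg_def, VolR]
        field_simp
        ring)
      (by
        intro i₁ i₂ j₁ j₂ h1 h2
        have := h2inc i₁ i₂ j₁ j₂ h1 h2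
        have heq : VolR f i₁ i₂ j₁ j₂ = VolR A i₁ i₂ j₁ j₂ / α := by
          simp only [VolR, hf_def]; ring
        rw [heq]; positivity)
      (by
        intro i₁ i₂ j₁ j₂ h1 h2
        have := h2inc i₁ i₂ j₁ j₂ h1 h2
        have heq : VolR g i₁ i₂ j₁ j₂ = VolR A i₁ i₂ j₁ j₂ / α := by
          simp only [VolR, hg_def]; ring
        rw [heq]; positivity)
    intro i₁ i₂ j₁ j₂ h1 h2
    have h3 := hres i₁ i₂ j₁ j₂ h1 h2
    have heq : VolR (Cunder x y A) i₁ i₂ j₁ j₂ =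
        VolR (fun i j => max (f i j) (g i j)) i₁ i₂ j₁ j₂ := by
      simp only [VolR, hCeq]
    rw [heq]
    exact h3
end

section
/- Let A: δ₁×δ₂ → ℝ be a nonzero grounded 2-increasing function on a finite mesh and let C̄_A be defined by C̄_A(x,y) = min{ x − V_A([0,x]×[y,1])/α_A , y − V_A([x,1]×[0,y])/α_A }, where α_A = max_{i,j}{ V_A([x_i,x_{i+1}]×[0,1])/(x_{i+1}−x_i), V_A([0,1]×[y_j,y_{j+1}])/(y_{j+1}−y_j) }. Then α_A · V_{C̄_A}(R_{ij}) ≥ V_A(R_{ij}) for all minimal rectangles R_{ij} = [x_i,x_{i+1}]×[y_j,y_{j+1}] of the mesh. -/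
open Finset

private lemma inner_min (α v fa fb fc fd ga gb gc gd : ℝ) (hα : 0 < α)
    (hEf : α * (fd - fc - fb + fa) = v)
    (hEg : α * (gd - gc - gb + ga) = v)
    (hcd : fc - gc ≤ fd - gd)
    (hab : fa - ga ≤ fb - gb)
    (hdb : fd - gd ≤ fb - gb)
    (hca : fc - gc ≤ fa - ga)
    (hB : v ≤ α * (fd - fc - gb + ga))
    (hC : v ≤ α * (gd - fc - gb + fa)) :
    v ≤ α * (min fd gd - min fc gc - min fb gb + min fa ga) := by
  rcases le_total fd gd with h1 | h1 <;> rcases le_total fa ga with h2 | h2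
  · rw [min_eq_left h1, min_eq_left h2, min_eq_left (by linarith : fc ≤ gc)]
    nlinarith [mul_nonneg hα.le (sub_nonneg.2 (min_le_left fb gb))]
  · rw [min_eq_left h1, min_eq_right h2, min_eq_left (by linarith : fc ≤ gc),
        min_eq_right (by linarith : gb ≤ fb)]
    linarith
  · rw [min_eq_right h1, min_eq_left h2, min_eq_left (by linarith : fc ≤ gc),
        min_eq_right (by linarith : gb ≤ fb)]
    linarith
  · rw [min_eq_right h1, min_eq_right h2, min_eq_right (by linarith : gb ≤ fb)]
    nlinarith [mul_nonneg hα.le (sub_nonneg.2 (min_le_right fc gc))]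

private lemma key_min (α xa xb ya yc Pa Pb Pc Pd Qa Qb Qc Qd v Sx Sy : ℝ)
    (hα : 0 < α)
    (hP : Pd - Pc - Pb + Pa = -v)
    (hQ : Qd - Qc - Qb + Qa = -v)
    (h3 : Pd - Qd - Pc + Qc = Sx)
    (h4 : Pb - Qb - Pa + Qa = Sx)
    (h5 : Pb - Qb - Pd + Qd = Sy)
    (h6 : Pa - Qa - Pc + Qc = Sy)
    (hSx : Sx ≤ α * (xb - xa))
    (hSy : Sy ≤ α * (yc - ya)) :
    v ≤ α * (min (xb - Pd/α) (yc - Qd/α) - min (xa - Pc/α) (yc - Qc/α)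
           - min (xb - Pb/α) (ya - Qb/α) + min (xa - Pa/α) (ya - Qa/α)) := by
  have hne : α ≠ 0 := hα.ne'
  have hDx : (0:ℝ) ≤ (α * (xb - xa) - Sx)/α := div_nonneg (by linarith) hα.le
  have hDy : (0:ℝ) ≤ (α * (yc - ya) - Sy)/α := div_nonneg (by linarith) hα.le
  refine inner_min α v (xa - Pa/α) (xb - Pb/α) (xa - Pc/α) (xb - Pd/α)
      (ya - Qa/α) (ya - Qb/α) (yc - Qc/α) (yc - Qd/α) hα ?_ ?_ ?_ ?_ ?_ ?_ ?_ ?_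
  · field_simp; linear_combination -hP
  · field_simp; linear_combination -hQ
  · have e : (xb - Pd/α) - (yc - Qd/α) - ((xa - Pc/α) - (yc - Qc/α))
        = (α * (xb - xa) - Sx)/α := by field_simp; linear_combination -h3
    linarith
  · have e : (xb - Pb/α) - (ya - Qb/α) - ((xa - Pa/α) - (ya - Qa/α))
        = (α * (xb - xa) - Sx)/α := by field_simp; linear_combination -h4
    linarith
  · have e : (xb - Pb/α) - (ya - Qb/α) - ((xb - Pd/α) - (yc - Qd/α))
        = (α * (yc - ya) - Sy)/α := by field_simp; linear_combination -h5
    linarith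
  · have e : (xa - Pa/α) - (ya - Qa/α) - ((xa - Pc/α) - (yc - Qc/α))
        = (α * (yc - ya) - Sy)/α := by field_simp; linear_combination -h6
    linarith
  · have e : α * ((xb - Pd/α) - (xa - Pc/α) - (ya - Qb/α) + (ya - Qa/α))
        = α * (xb - xa) - Sx + v := by field_simp; linear_combination -h3 - hQ
    linarith
  · have e : α * ((yc - Qd/α) - (xa - Pc/α) - (ya - Qb/α) + (xa - Pa/α))
        = α * (yc - ya) - Sy + v := by field_simp; linear_combination -h5 - hP
    linarith

theorem stmt5 {n m : ℕ} (x : Fin (n+2) → ℝ) (y : Fin (m+2) → ℝ)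
    (A : Fin (n+2) → Fin (m+2) → ℝ)
    (hx : IsMesh x) (hy : IsMesh y)
    (hg1 : ∀ i, A i 0 = 0) (hg2 : ∀ j, A 0 j = 0)
    (h2inc : ∀ i₁ i₂ j₁ j₂, i₁ ≤ i₂ → j₁ ≤ j₂ → 0 ≤ VolR A i₁ i₂ j₁ j₂)
    (hne : ∃ i j, A i j ≠ 0) :
    ∀ i j, Vol A i j ≤ alphaA x y A * Vol (Cbar x y A) i j := by
  have hXle : ∀ k : Fin (n+1), VolR A k.castSucc k.succ 0 (Fin.last (m+1))
      ≤ alphaA x y A * (x k.succ - x k.castSucc) := by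
    intro k
    have hk : (0:ℝ) < x k.succ - x k.castSucc := sub_pos.2 (hx.1 (Fin.castSucc_lt_succ (i := k)))
    have h1 : VolR A k.castSucc k.succ 0 (Fin.last (m+1)) / (x k.succ - x k.castSucc)
        ≤ alphaA x y A := by
      unfold alphaA
      refine le_trans ?_ (le_max_left _ _)
      exact le_ciSup (f := fun i : Fin (n+1) =>
        VolR A i.castSucc i.succ 0 (Fin.last (m+1)) / (x i.succ - x i.castSucc))
        (Set.Finite.bddAbove (Set.finite_range _)) k
    rw [div_le_iff₀ hk] at h1
    nlinarith [h1]
  have hYle : ∀ k : Fin (m+1), VolR A 0 (Fin.last (n+1)) k.castSucc k.succ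
      ≤ alphaA x y A * (y k.succ - y k.castSucc) := by
    intro k
    have hk : (0:ℝ) < y k.succ - y k.castSucc := sub_pos.2 (hy.1 (Fin.castSucc_lt_succ (i := k)))
    have h1 : VolR A 0 (Fin.last (n+1)) k.castSucc k.succ / (y k.succ - y k.castSucc)
        ≤ alphaA x y A := by
      unfold alphaA
      refine le_trans ?_ (le_max_right _ _)
      exact le_ciSup (f := fun j : Fin (m+1) =>
        VolR A 0 (Fin.last (n+1)) j.castSucc j.succ / (y j.succ - y j.castSucc))
        (Set.Finite.bddAbove (Set.finite_range _)) k
    rw [div_le_iff₀ hk] at h1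
    nlinarith [h1]
  have hα : 0 < alphaA x y A := by
    obtain ⟨i0, j0, h0⟩ := hne
    have hA0 : 0 < A i0 j0 := by
      have h := h2inc 0 i0 0 j0 (Fin.zero_le _) (Fin.zero_le _)
      simp only [VolR, hg1, hg2, sub_zero, add_zero] at h
      exact h.lt_of_ne (Ne.symm h0)
    have hNM : 0 < A (Fin.last (n+1)) (Fin.last (m+1)) := by
      have t1 := h2inc i0 (Fin.last (n+1)) j0 (Fin.last (m+1)) (Fin.le_last _) (Fin.le_last _)
      have t2 := h2inc 0 i0 j0 (Fin.last (m+1)) (Fin.zero_le _) (Fin.le_last _)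
      have t3 := h2inc i0 (Fin.last (n+1)) 0 j0 (Fin.le_last _) (Fin.zero_le _)
      simp only [VolR, hg1, hg2, sub_zero, add_zero, zero_sub, zero_add] at t1 t2 t3
      linarith
    by_contra hcon
    push_neg at hcon
    have hstep : ∀ k : Fin (n+1),
        A k.succ (Fin.last (m+1)) ≤ A k.castSucc (Fin.last (m+1)) := by
      intro k
      have h1 := hXle k
      have hk : (0:ℝ) < x k.succ - x k.castSucc := sub_pos.2 (hx.1 (Fin.castSucc_lt_succ (i := k)))
      have h2 : alphaA x y A * (x k.succ - x k.castSucc) ≤ 0 :=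
        mul_nonpos_of_nonpos_of_nonneg hcon hk.le
      simp only [VolR, hg1, sub_zero, add_zero] at h1
      linarith
    have hall : ∀ k : Fin (n+2), A k (Fin.last (m+1)) ≤ 0 := by
      intro k
      induction k using Fin.induction with
      | zero => simp [hg2]
      | succ k ih => exact le_trans (hstep k) ih
    linarith [hall (Fin.last (n+1))]
  intro i j
  show Vol A i j ≤ alphaA x y A *
      (Cbar x y A i.succ j.succ - Cbar x y A i.castSucc j.succ
       - Cbar x y A i.succ j.castSucc + Cbar x y A i.castSucc j.castSucc)
  simp only [Cbar]
  exact key_min (alphaA x y A) (x i.castSucc) (x i.succ) (y j.castSucc) (y j.succ)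
    (VolR A 0 i.castSucc j.castSucc (Fin.last (m+1)))
    (VolR A 0 i.succ j.castSucc (Fin.last (m+1)))
    (VolR A 0 i.castSucc j.succ (Fin.last (m+1)))
    (VolR A 0 i.succ j.succ (Fin.last (m+1)))
    (VolR A i.castSucc (Fin.last (n+1)) 0 j.castSucc)
    (VolR A i.succ (Fin.last (n+1)) 0 j.castSucc)
    (VolR A i.castSucc (Fin.last (n+1)) 0 j.succ)
    (VolR A i.succ (Fin.last (n+1)) 0 j.succ)
    (Vol A i j)
    (VolR A i.castSucc i.succ 0 (Fin.last (m+1)))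
    (VolR A 0 (Fin.last (n+1)) j.castSucc j.succ)
    hα (by simp only [Vol, VolR]; ring) (by simp only [Vol, VolR]; ring)
    (by simp only [VolR]; ring) (by simp only [VolR]; ring)
    (by simp only [VolR]; ring) (by simp only [VolR]; ring)
    (hXle i) (hYle j)
end

section
/- Let A: δ₁×δ₂ → ℝ be a nonzero grounded 2-increasing function on a finite mesh and let C̲_A(x,y) = max{ V_A([0,x]×[0,y])/α_A , x + y − 1 + V_A([x,1]×[y,1])/α_A }, where α_A = max_{i,j}{ V_A([x_i,x_{i+1}]×[0,1])/(x_{i+1}−x_i), V_A([0,1]×[y_j,y_{j+1}])/(y_{j+1}−y_j) }. Then α_A · V_{C̲_A}(R_{ij}) ≥ V_A(R_{ij}) for all minimal rectangles R_{ij} of the mesh. -/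
open Finset

private lemma supermod' (a₁ a₂ b₁ b₂ : ℝ) (ha : a₁ ≤ a₂) (hb : b₁ ≤ b₂) :
    max 0 (a₁ + b₂) + max 0 (a₂ + b₁) ≤ max 0 (a₁ + b₁) + max 0 (a₂ + b₂) := by
  simp only [max_def]
  split_ifs <;> linarith

theorem stmt6 {n m : ℕ} (x : Fin (n+2) → ℝ) (y : Fin (m+2) → ℝ)
    (A : Fin (n+2) → Fin (m+2) → ℝ)
    (hx : IsMesh x) (hy : IsMesh y)
    (hg1 : ∀ i, A i 0 = 0) (hg2 : ∀ j, A 0 j = 0)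
    (h2inc : ∀ i₁ i₂ j₁ j₂, i₁ ≤ i₂ → j₁ ≤ j₂ → 0 ≤ VolR A i₁ i₂ j₁ j₂)
    (hne : ∃ i j, A i j ≠ 0) :
    ∀ i j, Vol A i j ≤ alphaA x y A * Vol (Cunder x y A) i j := by
  obtain ⟨hxm, hx0, hx1⟩ := hx
  obtain ⟨hym, hy0, hy1⟩ := hy
  set α := alphaA x y A with hαdef
  have hnonneg : ∀ i j, 0 ≤ A i j := by
    intro i j
    have := h2inc 0 i 0 j (Fin.zero_le i) (Fin.zero_le j)
    simpa [VolR, hg1, hg2] using this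
  have hT : 0 < A (Fin.last (n+1)) (Fin.last (m+1)) := by
    obtain ⟨i, j, hij⟩ := hne
    have h1 := h2inc i (Fin.last (n+1)) 0 j (Fin.le_last i) (Fin.zero_le j)
    have h2 := h2inc 0 (Fin.last (n+1)) j (Fin.last (m+1)) (Fin.zero_le _) (Fin.le_last j)
    have h3 : 0 < A i j := lt_of_le_of_ne (hnonneg i j) (Ne.symm hij)
    simp only [VolR, hg1, hg2] at h1 h2
    linarith
  have hbddx : BddAbove (Set.range fun i : Fin (n+1) =>
      VolR A i.castSucc i.succ 0 (Fin.last (m+1)) / (x i.succ - x i.castSucc)) :=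
    Set.Finite.bddAbove (Set.finite_range _)
  have hbddy : BddAbove (Set.range fun j : Fin (m+1) =>
      VolR A 0 (Fin.last (n+1)) j.castSucc j.succ / (y j.succ - y j.castSucc)) :=
    Set.Finite.bddAbove (Set.finite_range _)
  have hxa : ∀ i : Fin (n+1),
      VolR A i.castSucc i.succ 0 (Fin.last (m+1)) / (x i.succ - x i.castSucc) ≤ α :=
    fun i => le_trans (le_ciSup hbddx i) (le_max_left _ _)
  have hya : ∀ j : Fin (m+1),
      VolR A 0 (Fin.last (n+1)) j.castSucc j.succ / (y j.succ - y j.castSucc) ≤ α :=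
    fun j => le_trans (le_ciSup hbddy j) (le_max_right _ _)
  have hgapx : ∀ i : Fin (n+1), 0 < x i.succ - x i.castSucc :=
    fun i => sub_pos.mpr (hxm Fin.castSucc_lt_succ)
  have hgapy : ∀ j : Fin (m+1), 0 < y j.succ - y j.castSucc :=
    fun j => sub_pos.mpr (hym Fin.castSucc_lt_succ)
  have hstripx : ∀ i : Fin (n+1),
      VolR A i.castSucc i.succ 0 (Fin.last (m+1)) ≤ α * (x i.succ - x i.castSucc) := by
    intro i
    have h1 := (div_le_iff₀ (hgapx i)).mp (hxa i)
    nlinarith [hgapx i]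
  have hstripy : ∀ j : Fin (m+1),
      VolR A 0 (Fin.last (n+1)) j.castSucc j.succ ≤ α * (y j.succ - y j.castSucc) := by
    intro j
    have h1 := (div_le_iff₀ (hgapy j)).mp (hya j)
    nlinarith [hgapy j]
  have hpos : 0 < α := by
    by_contra h
    push_neg at h
    have hstep : ∀ i : Fin (n+1), A i.succ (Fin.last (m+1)) ≤ A i.castSucc (Fin.last (m+1)) := by
      intro i
      have h3 : VolR A i.castSucc i.succ 0 (Fin.last (m+1)) ≤ 0 := by
        have := hstripx i
        nlinarith [hgapx i]
      simp only [VolR, hg1] at h3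
      linarith
    have hall : ∀ i : Fin (n+2), A i (Fin.last (m+1)) ≤ 0 := by
      intro i
      induction i using Fin.induction with
      | zero => simp [hg2]
      | succ i ih => exact le_trans (hstep i) ih
    exact absurd (hall (Fin.last (n+1))) (not_le.mpr hT)
  have hαne : α ≠ 0 := ne_of_gt hpos
  have hC : ∀ i j, Cunder x y A i j = A i j / α +
      max 0 ((x i - A i (Fin.last (m+1)) / α) +
        (y j - A (Fin.last (n+1)) j / α + (A (Fin.last (n+1)) (Fin.last (m+1)) / α - 1))) := by
    intro i j
    have hrw : A i j / α +
        max 0 ((x i - A i (Fin.last (m+1)) / α) +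
          (y j - A (Fin.last (n+1)) j / α + (A (Fin.last (n+1)) (Fin.last (m+1)) / α - 1)))
        = max (A i j / α + 0) (A i j / α +
          ((x i - A i (Fin.last (m+1)) / α) +
            (y j - A (Fin.last (n+1)) j / α + (A (Fin.last (n+1)) (Fin.last (m+1)) / α - 1)))) :=
      (max_add_add_left _ _ _).symm
    rw [hrw, add_zero]
    simp only [Cunder, VolR, hg1, hg2, ← hαdef]
    congr 1 <;> ring
  intro i j
  have hfm : x i.castSucc - A i.castSucc (Fin.last (m+1)) / α
      ≤ x i.succ - A i.succ (Fin.last (m+1)) / α := by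
    have h3 := hstripx i
    simp only [VolR, hg1] at h3
    have h4 : A i.succ (Fin.last (m+1)) / α - A i.castSucc (Fin.last (m+1)) / α
        ≤ x i.succ - x i.castSucc := by
      rw [div_sub_div_same, div_le_iff₀ hpos]
      nlinarith
    linarith
  have hgm : (y j.castSucc - A (Fin.last (n+1)) j.castSucc / α
        + (A (Fin.last (n+1)) (Fin.last (m+1)) / α - 1))
      ≤ (y j.succ - A (Fin.last (n+1)) j.succ / α
        + (A (Fin.last (n+1)) (Fin.last (m+1)) / α - 1)) := by
    have h3 := hstripy j
    simp only [VolR, hg2] at h3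
    have h4 : A (Fin.last (n+1)) j.succ / α - A (Fin.last (n+1)) j.castSucc / α
        ≤ y j.succ - y j.castSucc := by
      rw [div_sub_div_same, div_le_iff₀ hpos]
      nlinarith
    linarith
  have hsm := supermod' _ _ _ _ hfm hgm
  have expand : α * Vol (Cunder x y A) i j = Vol A i j + α *
      ((max 0 ((x i.castSucc - A i.castSucc (Fin.last (m+1)) / α) +
          (y j.castSucc - A (Fin.last (n+1)) j.castSucc / α
            + (A (Fin.last (n+1)) (Fin.last (m+1)) / α - 1)))
        + max 0 ((x i.succ - A i.succ (Fin.last (m+1)) / α) +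
          (y j.succ - A (Fin.last (n+1)) j.succ / α
            + (A (Fin.last (n+1)) (Fin.last (m+1)) / α - 1))))
      - ((max 0 ((x i.castSucc - A i.castSucc (Fin.last (m+1)) / α) +
          (y j.succ - A (Fin.last (n+1)) j.succ / α
            + (A (Fin.last (n+1)) (Fin.last (m+1)) / α - 1)))
        + max 0 ((x i.succ - A i.succ (Fin.last (m+1)) / α) +
          (y j.castSucc - A (Fin.last (n+1)) j.castSucc / α
            + (A (Fin.last (n+1)) (Fin.last (m+1)) / α - 1)))))) := by
    simp only [Vol, VolR, hC]
    field_simp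
    ring
  have hfin : 0 ≤ α * ((max 0 ((x i.castSucc - A i.castSucc (Fin.last (m+1)) / α) +
          (y j.castSucc - A (Fin.last (n+1)) j.castSucc / α
            + (A (Fin.last (n+1)) (Fin.last (m+1)) / α - 1)))
        + max 0 ((x i.succ - A i.succ (Fin.last (m+1)) / α) +
          (y j.succ - A (Fin.last (n+1)) j.succ / α
            + (A (Fin.last (n+1)) (Fin.last (m+1)) / α - 1))))
      - ((max 0 ((x i.castSucc - A i.castSucc (Fin.last (m+1)) / α) +
          (y j.succ - A (Fin.last (n+1)) j.succ / α
            + (A (Fin.last (n+1)) (Fin.last (m+1)) / α - 1)))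
        + max 0 ((x i.succ - A i.succ (Fin.last (m+1)) / α) +
          (y j.castSucc - A (Fin.last (n+1)) j.castSucc / α
            + (A (Fin.last (n+1)) (Fin.last (m+1)) / α - 1)))))) :=
    mul_nonneg hpos.le (by linarith)
  linarith [expand, hfin]
end

section
/- Let A: δ₁×δ₂ → ℝ be a nonzero grounded 2-increasing function on a finite mesh. If a real number α and a discrete copula C on the mesh satisfy α·V_C(R_{ij}) ≥ V_A(R_{ij}) for all minimal rectangles R_{ij}, then α ≥ α_A, where α_A = max_{i,j}{ V_A([x_i,x_{i+1}]×[0,1])/(x_{i+1}−x_i), V_A([0,1]×[y_j,y_{j+1}])/(y_{j+1}−y_j) }. -/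
open Finset

open Fin.NatCast in
lemma tele {k : ℕ} (f : Fin (k+2) → ℝ) :
    ∑ j : Fin (k+1), (f j.succ - f j.castSucc) = f (Fin.last (k+1)) - f 0 := by
  calc ∑ j : Fin (k+1), (f j.succ - f j.castSucc)
      = ∑ j ∈ Finset.range (k+1), (f ((j+1 : ℕ) : Fin (k+2)) - f ((j : ℕ) : Fin (k+2))) := by
        rw [← Fin.sum_univ_eq_sum_range (fun t : ℕ => f ((t+1 : ℕ) : Fin (k+2)) - f ((t : ℕ) : Fin (k+2))) (k+1)]
        refine Finset.sum_congr rfl fun j _ => ?_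
        have e1 : (((j : ℕ) + 1 : ℕ) : Fin (k+2)) = j.succ := by
          apply Fin.ext
          simp [Fin.val_cast_of_lt (Nat.succ_lt_succ j.isLt)]
        have e2 : (((j : ℕ) : ℕ) : Fin (k+2)) = j.castSucc := by
          apply Fin.ext
          simp [Fin.val_cast_of_lt (Nat.lt_succ_of_lt j.isLt)]
        rw [e1, e2]
    _ = f ((k+1 : ℕ) : Fin (k+2)) - f ((0 : ℕ) : Fin (k+2)) := by
        simpa using Finset.sum_range_sub (fun t : ℕ => f ((t : ℕ) : Fin (k+2))) (k+1)
    _ = f (Fin.last (k+1)) - f 0 := by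
        have e1 : ((k+1 : ℕ) : Fin (k+2)) = Fin.last (k+1) := by
          exact Fin.natCast_eq_last (k+1)
        have e2 : ((0 : ℕ) : Fin (k+2)) = 0 := by simp
        rw [e1, e2]

theorem stmt7 {n m : ℕ} (x : Fin (n+2) → ℝ) (y : Fin (m+2) → ℝ)
    (A C : Fin (n+2) → Fin (m+2) → ℝ) (α : ℝ)
    (hx : IsMesh x) (hy : IsMesh y)
    (hg1 : ∀ i, A i 0 = 0) (hg2 : ∀ j, A 0 j = 0)
    (h2inc : ∀ i₁ i₂ j₁ j₂, i₁ ≤ i₂ → j₁ ≤ j₂ → 0 ≤ VolR A i₁ i₂ j₁ j₂)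
    (hne : ∃ i j, A i j ≠ 0)
    (hC : IsDiscCopula x y C)
    (hdom : ∀ i j, Vol A i j ≤ α * Vol C i j) :
    alphaA x y A ≤ α := by
  obtain ⟨hC0, hC0', hCx, hCy, _⟩ := hC
  have hrow : ∀ i : Fin (n+1),
      VolR A i.castSucc i.succ 0 (Fin.last (m+1)) / (x i.succ - x i.castSucc) ≤ α := by
    intro i
    have hden : (0:ℝ) < x i.succ - x i.castSucc :=
      sub_pos.2 (hx.1 (Fin.castSucc_lt_succ : i.castSucc < i.succ))
    rw [div_le_iff₀ hden]
    have hA : VolR A i.castSucc i.succ 0 (Fin.last (m+1)) = ∑ j : Fin (m+1), Vol A i j := by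
      have h := tele (fun j => A i.succ j - A i.castSucc j)
      have h2 : ∑ j : Fin (m+1), Vol A i j
          = ∑ j : Fin (m+1), ((fun t => A i.succ t - A i.castSucc t) j.succ
              - (fun t => A i.succ t - A i.castSucc t) j.castSucc) :=
        Finset.sum_congr rfl fun j _ => by simp only [Vol, VolR]; ring
      rw [h2, h]; simp only [VolR]; ring
    have hCsum : ∑ j : Fin (m+1), Vol C i j = x i.succ - x i.castSucc := by
      have h := tele (fun j => C i.succ j - C i.castSucc j)
      have h2 : ∑ j : Fin (m+1), Vol C i j
          = ∑ j : Fin (m+1), ((fun t => C i.succ t - C i.castSucc t) j.succ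
              - (fun t => C i.succ t - C i.castSucc t) j.castSucc) :=
        Finset.sum_congr rfl fun j _ => by simp only [Vol, VolR]; ring
      rw [h2, h]
      rw [hC0 i.succ, hC0 i.castSucc, hCx i.succ, hCx i.castSucc]; ring
    calc VolR A i.castSucc i.succ 0 (Fin.last (m+1)) = ∑ j : Fin (m+1), Vol A i j := hA
      _ ≤ ∑ j : Fin (m+1), α * Vol C i j := Finset.sum_le_sum fun j _ => hdom i j
      _ = α * ∑ j : Fin (m+1), Vol C i j := by rw [Finset.mul_sum]
      _ = α * (x i.succ - x i.castSucc) := by rw [hCsum]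
  have hcol : ∀ j : Fin (m+1),
      VolR A 0 (Fin.last (n+1)) j.castSucc j.succ / (y j.succ - y j.castSucc) ≤ α := by
    intro j
    have hden : (0:ℝ) < y j.succ - y j.castSucc :=
      sub_pos.2 (hy.1 (Fin.castSucc_lt_succ : j.castSucc < j.succ))
    rw [div_le_iff₀ hden]
    have hA : VolR A 0 (Fin.last (n+1)) j.castSucc j.succ = ∑ i : Fin (n+1), Vol A i j := by
      have h := tele (fun i => A i j.succ - A i j.castSucc)
      have h2 : ∑ i : Fin (n+1), Vol A i j
          = ∑ i : Fin (n+1), ((fun t => A t j.succ - A t j.castSucc) i.succ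
              - (fun t => A t j.succ - A t j.castSucc) i.castSucc) :=
        Finset.sum_congr rfl fun i _ => by simp only [Vol, VolR]; ring
      rw [h2, h]; simp only [VolR]; ring
    have hCsum : ∑ i : Fin (n+1), Vol C i j = y j.succ - y j.castSucc := by
      have h := tele (fun i => C i j.succ - C i j.castSucc)
      have h2 : ∑ i : Fin (n+1), Vol C i j
          = ∑ i : Fin (n+1), ((fun t => C t j.succ - C t j.castSucc) i.succ
              - (fun t => C t j.succ - C t j.castSucc) i.castSucc) :=
        Finset.sum_congr rfl fun i _ => by simp only [Vol, VolR]; ring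
      rw [h2, h]
      rw [hC0' j.succ, hC0' j.castSucc, hCy j.succ, hCy j.castSucc]; ring
    calc VolR A 0 (Fin.last (n+1)) j.castSucc j.succ = ∑ i : Fin (n+1), Vol A i j := hA
      _ ≤ ∑ i : Fin (n+1), α * Vol C i j := Finset.sum_le_sum fun i _ => hdom i j
      _ = α * ∑ i : Fin (n+1), Vol C i j := by rw [Finset.mul_sum]
      _ = α * (y j.succ - y j.castSucc) := by rw [hCsum]
  exact max_le (ciSup_le hrow) (ciSup_le hcol)
end

section
/- Let A: δ₁×δ₂ → ℝ be a nonzero grounded 2-increasing function on a finite mesh with constant α_A, and let C be a discrete copula on the mesh satisfying α_A·V_C(R_{ij}) ≥ V_A(R_{ij}) for all minimal rectangles R_{ij}. Then C̲_A ≤ C ≤ C̄_A pointwise, where C̲_A(x,y) = max{ V_A([0,x]×[0,y])/α_A , x+y−1+V_A([x,1]×[y,1])/α_A } and C̄_A(x,y) = min{ x−V_A([0,x]×[y,1])/α_A , y−V_A([x,1]×[0,y])/α_A }. -/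
open Finset

lemma volr_nonneg_of_min {n m : ℕ} (Q : Fin (n+2) → Fin (m+2) → ℝ)
    (h : ∀ i j, 0 ≤ Vol Q i j) :
    ∀ i₁ i₂ j₁ j₂, i₁ ≤ i₂ → j₁ ≤ j₂ → 0 ≤ VolR Q i₁ i₂ j₁ j₂ := by
  have hstrip : ∀ i : Fin (n+1), Monotone (fun j => Q i.succ j - Q i.castSucc j) := by
    intro i
    rw [Fin.monotone_iff_le_succ]
    intro j
    have := h i j
    simp only [Vol, VolR] at this
    show Q i.succ j.succ - Q i.castSucc j.succ ≥ Q i.succ j.castSucc - Q i.castSucc j.castSucc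
    linarith
  intro i₁ i₂ j₁ j₂ hi hj
  have hcol : Monotone (fun i => Q i j₂ - Q i j₁) := by
    rw [Fin.monotone_iff_le_succ]
    intro i
    have := hstrip i hj
    show Q i.succ j₂ - Q i.succ j₁ ≥ Q i.castSucc j₂ - Q i.castSucc j₁
    simp only at this
    linarith
  have := hcol hi
  simp only at this
  simp only [VolR]
  linarith

lemma const_of_step {k : ℕ} (f : Fin (k+2) → ℝ)
    (h : ∀ i : Fin (k+1), f i.succ = f i.castSucc) : ∀ i, f i = f 0 := by
  intro i
  induction i using Fin.induction with
  | zero => rfl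
  | succ i ih => rw [h i]; exact ih

theorem stmt8 {n m : ℕ} (x : Fin (n+2) → ℝ) (y : Fin (m+2) → ℝ)
    (A C : Fin (n+2) → Fin (m+2) → ℝ)
    (hx : IsMesh x) (hy : IsMesh y)
    (hg1 : ∀ i, A i 0 = 0) (hg2 : ∀ j, A 0 j = 0)
    (h2inc : ∀ i₁ i₂ j₁ j₂, i₁ ≤ i₂ → j₁ ≤ j₂ → 0 ≤ VolR A i₁ i₂ j₁ j₂)
    (hne : ∃ i j, A i j ≠ 0)
    (hC : IsDiscCopula x y C)
    (hdom : ∀ i j, Vol A i j ≤ alphaA x y A * Vol C i j) :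
    ∀ i j, Cunder x y A i j ≤ C i j ∧ C i j ≤ Cbar x y A i j := by
  classical
  obtain ⟨hC1, hC2, hCx, hCy, hCinc⟩ := hC
  -- positivity of alpha
  have hαpos : 0 < alphaA x y A := by
    have hex : ∃ i0 : Fin (n+1), 0 < VolR A i0.castSucc i0.succ 0 (Fin.last (m+1)) := by
      by_contra h'
      push_neg at h'
      have hz : ∀ i0 : Fin (n+1), VolR A i0.castSucc i0.succ 0 (Fin.last (m+1)) = 0 :=
        fun i0 => le_antisymm (h' i0)
          (h2inc _ _ _ _ (le_of_lt (Fin.castSucc_lt_succ (i := i0))) (Fin.zero_le _))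
      have hstep : ∀ i0 : Fin (n+1),
          A i0.succ (Fin.last (m+1)) = A i0.castSucc (Fin.last (m+1)) := by
        intro i0
        have := hz i0
        simp only [VolR, hg1] at this
        linarith
      have htop : ∀ i, A i (Fin.last (m+1)) = 0 := by
        intro i
        have := const_of_step (fun i => A i (Fin.last (m+1))) hstep i
        simpa [hg2] using this
      obtain ⟨i, j, hij⟩ := hne
      apply hij
      have h1 := h2inc 0 i 0 j (Fin.zero_le _) (Fin.zero_le _)
      have h2 := h2inc 0 i j (Fin.last (m+1)) (Fin.zero_le _) (Fin.le_last _)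
      simp only [VolR, hg1, hg2, htop] at h1 h2
      linarith
    obtain ⟨i0, hi0⟩ := hex
    have hw : 0 < x i0.succ - x i0.castSucc :=
      sub_pos.mpr (hx.1 (Fin.castSucc_lt_succ (i := i0)))
    have hpos : 0 < VolR A i0.castSucc i0.succ 0 (Fin.last (m+1)) / (x i0.succ - x i0.castSucc) :=
      div_pos hi0 hw
    have hle : VolR A i0.castSucc i0.succ 0 (Fin.last (m+1)) / (x i0.succ - x i0.castSucc) ≤
        ⨆ i : Fin (n+1),
          VolR A i.castSucc i.succ 0 (Fin.last (m+1)) / (x i.succ - x i.castSucc) :=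
      le_ciSup (f := fun i : Fin (n+1) =>
        VolR A i.castSucc i.succ 0 (Fin.last (m+1)) / (x i.succ - x i.castSucc))
        (Set.Finite.bddAbove (Set.finite_range _)) i0
    exact lt_of_lt_of_le hpos (le_trans hle (le_max_left _ _))
  -- the key domination on all rectangles
  have key : ∀ i₁ i₂ j₁ j₂, i₁ ≤ i₂ → j₁ ≤ j₂ →
      VolR A i₁ i₂ j₁ j₂ ≤ alphaA x y A * VolR C i₁ i₂ j₁ j₂ := by
    intro i₁ i₂ j₁ j₂ hi hj
    have h := volr_nonneg_of_min (fun i j => alphaA x y A * C i j - A i j)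
      (fun i j => by
        have hd := hdom i j
        simp only [Vol, VolR] at hd ⊢
        nlinarith [hd]) i₁ i₂ j₁ j₂ hi hj
    simp only [VolR] at h ⊢
    nlinarith [h]
  intro i j
  have hCLL : C (Fin.last (n+1)) (Fin.last (m+1)) = 1 := by rw [hCx]; exact hx.2.2
  have hC0L : C 0 (Fin.last (m+1)) = 0 := hC2 _
  have hCL0 : C (Fin.last (n+1)) 0 = 0 := hC1 _
  have b1 : VolR A 0 i 0 j ≤ alphaA x y A * C i j := by
    have k := key 0 i 0 j (Fin.zero_le _) (Fin.zero_le _)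
    have e : VolR C 0 i 0 j = C i j := by simp [VolR, hC1, hC2]
    rwa [e] at k
  have b2 : VolR A i (Fin.last (n+1)) j (Fin.last (m+1)) ≤
      alphaA x y A * (1 - x i - y j + C i j) := by
    have k := key i (Fin.last (n+1)) j (Fin.last (m+1)) (Fin.le_last _) (Fin.le_last _)
    have e : VolR C i (Fin.last (n+1)) j (Fin.last (m+1)) = 1 - x i - y j + C i j := by
      simp only [VolR, hCLL, hCx, hCy]; try ring
    rwa [e] at k
  have b3 : VolR A 0 i j (Fin.last (m+1)) ≤ alphaA x y A * (x i - C i j) := by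
    have k := key 0 i j (Fin.last (m+1)) (Fin.zero_le _) (Fin.le_last _)
    have e : VolR C 0 i j (Fin.last (m+1)) = x i - C i j := by
      simp only [VolR, hCx, hC0L, hC2, hx.2.1]; try ring
    rwa [e] at k
  have b4 : VolR A i (Fin.last (n+1)) 0 j ≤ alphaA x y A * (y j - C i j) := by
    have k := key i (Fin.last (n+1)) 0 j (Fin.le_last _) (Fin.zero_le _)
    have e : VolR C i (Fin.last (n+1)) 0 j = y j - C i j := by
      simp only [VolR, hCy, hCL0, hC1, hy.2.1]; try ring
    rwa [e] at k
  constructor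
  · apply max_le
    · rw [div_le_iff₀ hαpos, mul_comm]; exact b1
    · have h2' : VolR A i (Fin.last (n+1)) j (Fin.last (m+1)) / alphaA x y A ≤
          1 - x i - y j + C i j := by
        rw [div_le_iff₀ hαpos, mul_comm]; exact b2
      linarith
  · apply le_min
    · have h3' : VolR A 0 i j (Fin.last (m+1)) / alphaA x y A ≤ x i - C i j := by
        rw [div_le_iff₀ hαpos, mul_comm]; exact b3
      linarith
    · have h4' : VolR A i (Fin.last (n+1)) 0 j / alphaA x y A ≤ y j - C i j := by
        rw [div_le_iff₀ hαpos, mul_comm]; exact b4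
      linarith
end

section
/- For a discrete quasi-copula Q on a finite mesh, the Minkowski norm of Q equals 2α_{Q_pos} − 1, where Q_pos is the grounded function on the mesh with V_{Q_pos}(R_{ij}) = max{V_Q(R_{ij}),0} for all minimal rectangles, and α_{Q_pos} = max_{i,j}{ V_{Q_pos}([x_i,x_{i+1}]×[0,1])/(x_{i+1}−x_i), V_{Q_pos}([0,1]×[y_j,y_{j+1}])/(y_{j+1}−y_j) }. -/
open Finset

lemma tele_s10 {k : ℕ} (F : Fin (k+2) → ℝ) (i : Fin (k+2)) :
    F i - F 0 = ∑ l : Fin (k+1), if l.succ ≤ i then F l.succ - F l.castSucc else 0 := by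
  induction i using Fin.induction with
  | zero =>
    have : ∀ l : Fin (k+1), ¬ (l.succ ≤ (0 : Fin (k+2))) := by
      intro l h
      exact absurd (Fin.le_zero_iff.mp h) (Fin.succ_ne_zero l)
    simp [this]
  | succ i ih =>
    have key : ∀ l : Fin (k+1),
        (if l.succ ≤ i.succ then F l.succ - F l.castSucc else 0)
        = (if l.succ ≤ i.castSucc then F l.succ - F l.castSucc else 0)
          + (if l = i then F l.succ - F l.castSucc else 0) := by
      intro l
      have h1 : (l.succ ≤ i.succ) ↔ (l.1 + 1 ≤ i.1 + 1) := by
        rw [Fin.le_def]; simp only [Fin.val_succ]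
      have h2 : (l.succ ≤ i.castSucc) ↔ (l.1 + 1 ≤ i.1) := by
        rw [Fin.le_def]; simp only [Fin.val_succ, Fin.coe_castSucc]
      have h3 : (l = i) ↔ (l.1 = i.1) := Fin.ext_iff
      simp only [h1, h2, h3]
      split_ifs <;> first | ring1 | (exfalso; omega)
    rw [Finset.sum_congr rfl (fun l _ => key l), Finset.sum_add_distrib, ← ih,
      Finset.sum_ite_eq' univ i (fun l => F l.succ - F l.castSucc)]
    simp only [Finset.mem_univ, if_true]
    ring

/-- 0/1 indicator of `l.succ ≤ i`. -/
noncomputable def indF {k : ℕ} (i : Fin (k+2)) (l : Fin (k+1)) : ℝ :=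
  if l.succ ≤ i then 1 else 0

lemma indF_nonneg {k : ℕ} (i : Fin (k+2)) (l : Fin (k+1)) : 0 ≤ indF i l := by
  unfold indF; split_ifs <;> norm_num

lemma indF_mono {k : ℕ} {i₁ i₂ : Fin (k+2)} (h : i₁ ≤ i₂) (l : Fin (k+1)) :
    indF i₁ l ≤ indF i₂ l := by
  unfold indF
  by_cases h1 : l.succ ≤ i₁
  · rw [if_pos h1, if_pos (h1.trans h)]
  · rw [if_neg h1]
    split_ifs <;> norm_num

lemma indF_zero {k : ℕ} (l : Fin (k+1)) : indF (0 : Fin (k+2)) l = 0 := by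
  unfold indF
  rw [if_neg]
  intro h
  exact absurd (Fin.le_zero_iff.mp h) (Fin.succ_ne_zero l)

lemma indF_last {k : ℕ} (l : Fin (k+1)) : indF (Fin.last (k+1)) l = 1 :=
  if_pos (Fin.le_last _)

lemma indF_pair {k : ℕ} (i l : Fin (k+1)) :
    indF i.succ l - indF i.castSucc l = if l = i then 1 else 0 := by
  unfold indF
  have h1 : (l.succ ≤ i.succ) ↔ (l.1 + 1 ≤ i.1 + 1) := by
    rw [Fin.le_def]; simp only [Fin.val_succ]
  have h2 : (l.succ ≤ i.castSucc) ↔ (l.1 + 1 ≤ i.1) := by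
    rw [Fin.le_def]; simp only [Fin.val_succ, Fin.coe_castSucc]
  have h3 : (l = i) ↔ (l.1 = i.1) := Fin.ext_iff
  simp only [h1, h2, h3]
  split_ifs <;> first | ring1 | (exfalso; omega)

/-- Telescoping sum in indicator form. -/
lemma teleInd {k : ℕ} (F : Fin (k+2) → ℝ) (i : Fin (k+2)) :
    F i - F 0 = ∑ l : Fin (k+1), indF i l * (F l.succ - F l.castSucc) := by
  rw [tele_s10 F i]
  refine Finset.sum_congr rfl fun l _ => ?_
  unfold indF
  split_ifs <;> ring

/-- Staircase (double cumulative sum) function built from a mass matrix. -/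
noncomputable def stairF {n m : ℕ} (q : Fin (n+1) → Fin (m+1) → ℝ)
    (i : Fin (n+2)) (j : Fin (m+2)) : ℝ :=
  ∑ k : Fin (n+1), ∑ l : Fin (m+1), indF i k * indF j l * q k l

lemma stairF_volR {n m : ℕ} (q : Fin (n+1) → Fin (m+1) → ℝ)
    (i₁ i₂ : Fin (n+2)) (j₁ j₂ : Fin (m+2)) :
    VolR (stairF q) i₁ i₂ j₁ j₂ =
      ∑ k : Fin (n+1), ∑ l : Fin (m+1),
        (indF i₂ k - indF i₁ k) * (indF j₂ l - indF j₁ l) * q k l := by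
  unfold VolR stairF
  rw [← Finset.sum_sub_distrib, ← Finset.sum_sub_distrib, ← Finset.sum_add_distrib]
  refine Finset.sum_congr rfl fun k _ => ?_
  rw [← Finset.sum_sub_distrib, ← Finset.sum_sub_distrib, ← Finset.sum_add_distrib]
  exact Finset.sum_congr rfl fun l _ => by ring

lemma stairF_vol {n m : ℕ} (q : Fin (n+1) → Fin (m+1) → ℝ)
    (k : Fin (n+1)) (l : Fin (m+1)) :
    Vol (stairF q) k l = q k l := by
  rw [Vol, stairF_volR]
  have : ∀ k' l', (indF k.succ k' - indF k.castSucc k') * (indF l.succ l' - indF l.castSucc l') * q k' l'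
      = if k' = k then (if l' = l then q k' l' else 0) else 0 := by
    intro k' l'
    rw [indF_pair, indF_pair]
    split_ifs <;> ring
  simp_rw [this]
  simp [Finset.sum_ite_eq']

lemma stairF_zero_right {n m : ℕ} (q : Fin (n+1) → Fin (m+1) → ℝ) (i : Fin (n+2)) :
    stairF q i 0 = 0 := by
  unfold stairF
  simp [indF_zero]

lemma stairF_zero_left {n m : ℕ} (q : Fin (n+1) → Fin (m+1) → ℝ) (j : Fin (m+2)) :
    stairF q 0 j = 0 := by
  unfold stairF
  simp [indF_zero]

lemma stairF_last_right {n m : ℕ} (q : Fin (n+1) → Fin (m+1) → ℝ) (i : Fin (n+2)) :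
    stairF q i (Fin.last (m+1)) = ∑ k : Fin (n+1), indF i k * (∑ l : Fin (m+1), q k l) := by
  unfold stairF
  refine Finset.sum_congr rfl fun k _ => ?_
  rw [Finset.mul_sum]
  exact Finset.sum_congr rfl fun l _ => by rw [indF_last]; ring

lemma stairF_last_left {n m : ℕ} (q : Fin (n+1) → Fin (m+1) → ℝ) (j : Fin (m+2)) :
    stairF q (Fin.last (n+1)) j = ∑ l : Fin (m+1), indF j l * (∑ k : Fin (n+1), q k l) := by
  unfold stairF
  rw [Finset.sum_comm]
  refine Finset.sum_congr rfl fun l _ => ?_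
  rw [Finset.mul_sum]
  exact Finset.sum_congr rfl fun k _ => by rw [indF_last]; ring

/-- Any doubly grounded function is the staircase of its minimal volumes. -/
lemma grounded_eq_stairF {n m : ℕ} (A : Fin (n+2) → Fin (m+2) → ℝ)
    (h1 : ∀ i, A i 0 = 0) (h2 : ∀ j, A 0 j = 0) (i : Fin (n+2)) (j : Fin (m+2)) :
    A i j = stairF (fun k l => Vol A k l) i j := by
  have hi := teleInd (fun i => A i j) i
  rw [h2, sub_zero] at hi
  rw [hi]
  unfold stairF
  refine Finset.sum_congr rfl fun k _ => ?_
  have hj := teleInd (fun j => A k.succ j - A k.castSucc j) j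
  rw [h1, h1, sub_self, sub_zero] at hj
  rw [hj, Finset.mul_sum]
  refine Finset.sum_congr rfl fun l _ => ?_
  unfold Vol VolR
  ring

/-- Row strip of a function grounded on the bottom edge. -/
lemma stripSum {n m : ℕ} (A : Fin (n+2) → Fin (m+2) → ℝ)
    (hA : ∀ i, A i 0 = 0) (k : Fin (n+1)) :
    VolR A k.castSucc k.succ 0 (Fin.last (m+1)) = ∑ l : Fin (m+1), Vol A k l := by
  have h := teleInd (fun j => A k.succ j - A k.castSucc j) (Fin.last (m+1))
  rw [hA, hA, sub_self, sub_zero] at h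
  unfold VolR
  rw [hA, hA]
  rw [show A k.succ (Fin.last (m+1)) - A k.castSucc (Fin.last (m+1)) - 0 + 0
      = A k.succ (Fin.last (m+1)) - A k.castSucc (Fin.last (m+1)) by ring, h]
  refine Finset.sum_congr rfl fun l _ => ?_
  rw [indF_last]
  unfold Vol VolR
  ring

/-- Column strip of a function grounded on the left edge. -/
lemma colSum {n m : ℕ} (A : Fin (n+2) → Fin (m+2) → ℝ)
    (hA : ∀ j, A 0 j = 0) (l : Fin (m+1)) :
    VolR A 0 (Fin.last (n+1)) l.castSucc l.succ = ∑ k : Fin (n+1), Vol A k l := by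
  have h := teleInd (fun i => A i l.succ - A i l.castSucc) (Fin.last (n+1))
  rw [hA, hA, sub_self, sub_zero] at h
  unfold VolR
  rw [hA, hA]
  rw [show A (Fin.last (n+1)) l.succ - 0 - A (Fin.last (n+1)) l.castSucc + 0
      = A (Fin.last (n+1)) l.succ - A (Fin.last (n+1)) l.castSucc by ring, h]
  refine Finset.sum_congr rfl fun k _ => ?_
  rw [indF_last]
  unfold Vol VolR
  ring
theorem stmt10 {n m : ℕ} (x : Fin (n+2) → ℝ) (y : Fin (m+2) → ℝ)
    (Q Qpos : Fin (n+2) → Fin (m+2) → ℝ)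
    (hx : IsMesh x) (hy : IsMesh y) (hQ : IsDiscQuasiCopula x y Q)
    (hposg1 : ∀ i, Qpos i 0 = 0) (hposg2 : ∀ j, Qpos 0 j = 0)
    (hpos : ∀ i j, Vol Qpos i j = max (Vol Q i j) 0) :
    IsLeast {r : ℝ | ∃ s t : ℝ, ∃ B C : Fin (n+2) → Fin (m+2) → ℝ,
        0 ≤ s ∧ 0 ≤ t ∧ IsDiscCopula x y B ∧ IsDiscCopula x y C ∧
        (∀ i j, Q i j = s * B i j - t * C i j) ∧ r = s + t}
      (2 * alphaA x y Qpos - 1) := by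
  obtain ⟨hxs, hx0, hx1⟩ := hx
  obtain ⟨hys, hy0, hy1⟩ := hy
  obtain ⟨hQ1, hQ2, hQ3, hQ4, hQ5, hQ6, hQ7⟩ := hQ
  set α := alphaA x y Qpos with hαdef
  -- positive spacings
  have hax : ∀ k : Fin (n+1), 0 < x k.succ - x k.castSucc :=
    fun k => sub_pos.2 (hxs (Fin.castSucc_lt_succ : k.castSucc < k.succ))
  have hby : ∀ l : Fin (m+1), 0 < y l.succ - y l.castSucc :=
    fun l => sub_pos.2 (hys (Fin.castSucc_lt_succ : l.castSucc < l.succ))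
  -- total spacings
  have hsuma : ∑ k : Fin (n+1), (x k.succ - x k.castSucc) = 1 := by
    have h := teleInd x (Fin.last (n+1))
    rw [hx1, hx0, sub_zero] at h
    rw [h]
    exact Finset.sum_congr rfl fun k _ => by rw [indF_last]; ring
  have hsumb : ∑ l : Fin (m+1), (y l.succ - y l.castSucc) = 1 := by
    have h := teleInd y (Fin.last (m+1))
    rw [hy1, hy0, sub_zero] at h
    rw [h]
    exact Finset.sum_congr rfl fun l _ => by rw [indF_last]; ring
  -- strips of Qpos in terms of max volumes
  have stripQpos : ∀ k : Fin (n+1),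
      VolR Qpos k.castSucc k.succ 0 (Fin.last (m+1)) = ∑ l : Fin (m+1), max (Vol Q k l) 0 := by
    intro k
    rw [stripSum Qpos hposg1 k]
    exact Finset.sum_congr rfl fun l _ => hpos k l
  have colQpos : ∀ l : Fin (m+1),
      VolR Qpos 0 (Fin.last (n+1)) l.castSucc l.succ = ∑ k : Fin (n+1), max (Vol Q k l) 0 := by
    intro l
    rw [colSum Qpos hposg2 l]
    exact Finset.sum_congr rfl fun k _ => hpos k l
  -- α is an upper bound for the two families of ratios
  have hαub1 : ∀ k : Fin (n+1),
      VolR Qpos k.castSucc k.succ 0 (Fin.last (m+1)) / (x k.succ - x k.castSucc) ≤ α := by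
    intro k
    have hb : BddAbove (Set.range fun k : Fin (n+1) =>
        VolR Qpos k.castSucc k.succ 0 (Fin.last (m+1)) / (x k.succ - x k.castSucc)) :=
      Set.Finite.bddAbove (Set.finite_range _)
    refine le_trans (le_ciSup hb k) ?_
    rw [hαdef]
    unfold alphaA
    exact le_max_left _ _
  have hαub2 : ∀ l : Fin (m+1),
      VolR Qpos 0 (Fin.last (n+1)) l.castSucc l.succ / (y l.succ - y l.castSucc) ≤ α := by
    intro l
    have hb : BddAbove (Set.range fun l : Fin (m+1) =>
        VolR Qpos 0 (Fin.last (n+1)) l.castSucc l.succ / (y l.succ - y l.castSucc)) :=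
      Set.Finite.bddAbove (Set.finite_range _)
    refine le_trans (le_ciSup hb l) ?_
    rw [hαdef]
    unfold alphaA
    exact le_max_right _ _
  -- the strip of Q itself equals the spacing
  have stripQ : ∀ k : Fin (n+1),
      ∑ l : Fin (m+1), Vol Q k l = x k.succ - x k.castSucc := by
    intro k
    rw [← stripSum Q hQ1 k]
    unfold VolR
    rw [hQ3, hQ3, hQ1, hQ1]
    ring
  have colQ : ∀ l : Fin (m+1),
      ∑ k : Fin (n+1), Vol Q k l = y l.succ - y l.castSucc := by
    intro l
    rw [← colSum Q hQ2 l]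
    unfold VolR
    rw [hQ4, hQ4, hQ2, hQ2]
    ring
  -- spacing ≤ strip of Qpos
  have hstrip_ge : ∀ k : Fin (n+1),
      x k.succ - x k.castSucc ≤ VolR Qpos k.castSucc k.succ 0 (Fin.last (m+1)) := by
    intro k
    rw [stripQpos k, ← stripQ k]
    exact Finset.sum_le_sum fun l _ => le_max_left _ _
  have hcol_ge : ∀ l : Fin (m+1),
      y l.succ - y l.castSucc ≤ VolR Qpos 0 (Fin.last (n+1)) l.castSucc l.succ := by
    intro l
    rw [colQpos l, ← colQ l]
    exact Finset.sum_le_sum fun k _ => le_max_left _ _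
  have hα1 : 1 ≤ α := by
    refine le_trans ?_ (hαub1 0)
    rw [le_div_iff₀ (hax 0), one_mul]
    exact hstrip_ge 0
  have hαpos : 0 < α := lt_of_lt_of_le one_pos hα1
  -- strip of Qpos is at most α times the spacing
  have hstrip_le : ∀ k : Fin (n+1),
      VolR Qpos k.castSucc k.succ 0 (Fin.last (m+1)) ≤ α * (x k.succ - x k.castSucc) := by
    intro k
    have := hαub1 k
    rw [div_le_iff₀ (hax k)] at this
    linarith [this]
  have hcol_le : ∀ l : Fin (m+1),
      VolR Qpos 0 (Fin.last (n+1)) l.castSucc l.succ ≤ α * (y l.succ - y l.castSucc) := by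
    intro l
    have := hαub2 l
    rw [div_le_iff₀ (hby l)] at this
    linarith [this]
  constructor
  · -- membership: explicit decomposition with s = α, t = α - 1
    show ∃ s t : ℝ, ∃ B C : Fin (n+2) → Fin (m+2) → ℝ,
        0 ≤ s ∧ 0 ≤ t ∧ IsDiscCopula x y B ∧ IsDiscCopula x y C ∧
        (∀ i j, Q i j = s * B i j - t * C i j) ∧ 2 * α - 1 = s + t
    by_cases hone : α = 1
    · -- α = 1 : Q itself is a copula
      have hterm : ∀ (k : Fin (n+1)) (l : Fin (m+1)), max (Vol Q k l) 0 = Vol Q k l := by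
        intro k l
        have hz : ∀ l' ∈ (univ : Finset (Fin (m+1))),
            (0:ℝ) ≤ max (Vol Q k l') 0 - Vol Q k l' :=
          fun l' _ => sub_nonneg.2 (le_max_left _ _)
        have hsz : ∑ l' : Fin (m+1), (max (Vol Q k l') 0 - Vol Q k l') = 0 := by
          rw [Finset.sum_sub_distrib, stripQ k, ← stripQpos k]
          have h1 := hstrip_le k
          rw [hone, one_mul] at h1
          have h2 := hstrip_ge k
          linarith
        have := (Finset.sum_eq_zero_iff_of_nonneg hz).1 hsz l (mem_univ l)
        linarith
      have hVQ0 : ∀ (k : Fin (n+1)) (l : Fin (m+1)), 0 ≤ Vol Q k l := by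
        intro k l
        have := hterm k l
        have h0 : (0:ℝ) ≤ max (Vol Q k l) 0 := le_max_right _ _
        linarith
      refine ⟨1, 0, Q, fun i j => x i * y j, zero_le_one, le_refl 0, ?_, ?_, ?_, ?_⟩
      · refine ⟨hQ1, hQ2, hQ3, hQ4, ?_⟩
        intro i₁ i₂ j₁ j₂ h h'
        have hrec : ∀ i j, Q i j = stairF (fun k l => Vol Q k l) i j :=
          grounded_eq_stairF Q hQ1 hQ2
        have heq : VolR Q i₁ i₂ j₁ j₂
            = VolR (stairF fun k l => Vol Q k l) i₁ i₂ j₁ j₂ := by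
          unfold VolR
          rw [hrec, hrec, hrec, hrec]
        rw [heq, stairF_volR]
        refine Finset.sum_nonneg fun k _ => Finset.sum_nonneg fun l _ => ?_
        exact mul_nonneg (mul_nonneg (sub_nonneg.2 (indF_mono h _))
          (sub_nonneg.2 (indF_mono h' _))) (hVQ0 k l)
      · refine ⟨fun i => by show x i * y 0 = 0; rw [hy0, mul_zero],
          fun j => by show x 0 * y j = 0; rw [hx0, zero_mul],
          fun i => by show x i * y (Fin.last (m+1)) = x i; rw [hy1, mul_one],
          fun j => by show x (Fin.last (n+1)) * y j = y j; rw [hx1, one_mul], ?_⟩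
        intro i₁ i₂ j₁ j₂ h h'
        have heq : VolR (fun i j => x i * y j) i₁ i₂ j₁ j₂
            = (x i₂ - x i₁) * (y j₂ - y j₁) := by
          unfold VolR
          ring
        rw [heq]
        exact mul_nonneg (sub_nonneg.2 (hxs.monotone h)) (sub_nonneg.2 (hys.monotone h'))
      · intro i j
        ring
      · rw [hone]
        norm_num
    · -- α > 1 : general construction
      have hαgt : 1 < α := lt_of_le_of_ne hα1 (Ne.symm hone)
      have hαne : α - 1 ≠ 0 := sub_ne_zero.2 (ne_of_gt hαgt)
      set p : Fin (n+1) → Fin (m+1) → ℝ := fun k l => max (Vol Q k l) 0 / α with hpdef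
      set rr : Fin (n+1) → ℝ := fun k => ∑ l : Fin (m+1), p k l with hrrdef
      set cc : Fin (m+1) → ℝ := fun l => ∑ k : Fin (n+1), p k l with hccdef
      set T : ℝ := ∑ k : Fin (n+1), rr k with hTdef
      set q : Fin (n+1) → Fin (m+1) → ℝ := fun k l =>
        p k l + (x k.succ - x k.castSucc - rr k) * (y l.succ - y l.castSucc - cc l) / (1 - T)
        with hqdef
      have hp0 : ∀ (k : Fin (n+1)) (l : Fin (m+1)), 0 ≤ p k l :=
        fun k l => div_nonneg (le_max_right _ _) hαpos.le
      have hrr_le : ∀ k : Fin (n+1), rr k ≤ x k.succ - x k.castSucc := by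
        intro k
        have h1 : rr k = (∑ l : Fin (m+1), max (Vol Q k l) 0) / α := by
          rw [hrrdef]
          simp only
          rw [← Finset.sum_div]
        rw [h1, div_le_iff₀ hαpos, ← stripQpos k]
        have := hstrip_le k
        linarith
      have hcc_le : ∀ l : Fin (m+1), cc l ≤ y l.succ - y l.castSucc := by
        intro l
        have h1 : cc l = (∑ k : Fin (n+1), max (Vol Q k l) 0) / α := by
          rw [hccdef]
          simp only
          rw [← Finset.sum_div]
        rw [h1, div_le_iff₀ hαpos, ← colQpos l]
        have := hcol_le l
        linarith
      have hT_cc : T = ∑ l : Fin (m+1), cc l := by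
        rw [hTdef, hrrdef, hccdef]
        simp only
        exact Finset.sum_comm
      have hT_le : T ≤ 1 := by
        rw [hTdef]
        calc ∑ k : Fin (n+1), rr k ≤ ∑ k : Fin (n+1), (x k.succ - x k.castSucc) :=
              Finset.sum_le_sum fun k _ => hrr_le k
          _ = 1 := hsuma
      have hq_ge_p : ∀ (k : Fin (n+1)) (l : Fin (m+1)), p k l ≤ q k l := by
        intro k l
        rw [hqdef]
        exact le_add_of_nonneg_right (div_nonneg
          (mul_nonneg (sub_nonneg.2 (hrr_le k)) (sub_nonneg.2 (hcc_le l)))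
          (sub_nonneg.2 hT_le))
      have hq0 : ∀ (k : Fin (n+1)) (l : Fin (m+1)), 0 ≤ q k l :=
        fun k l => (hp0 k l).trans (hq_ge_p k l)
      have hrow : ∀ k : Fin (n+1), ∑ l : Fin (m+1), q k l = x k.succ - x k.castSucc := by
        intro k
        have hsplit : ∑ l : Fin (m+1), q k l
            = rr k + (x k.succ - x k.castSucc - rr k) * ((1 - T) / (1 - T)) := by
          rw [hqdef]
          simp only
          rw [Finset.sum_add_distrib]
          have hfac : ∀ l : Fin (m+1),
              (x k.succ - x k.castSucc - rr k) * (y l.succ - y l.castSucc - cc l) / (1 - T)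
              = ((x k.succ - x k.castSucc - rr k) / (1 - T)) * (y l.succ - y l.castSucc - cc l) := by
            intro l
            ring
          have h2 : ∑ l : Fin (m+1),
              (x k.succ - x k.castSucc - rr k) * (y l.succ - y l.castSucc - cc l) / (1 - T)
              = (x k.succ - x k.castSucc - rr k) * ((1 - T) / (1 - T)) := by
            rw [Finset.sum_congr rfl fun l _ => hfac l, ← Finset.mul_sum,
              Finset.sum_sub_distrib, hsumb, ← hT_cc]
            ring
          rw [h2]
        by_cases hT1 : T = 1
        · have hz : ∀ k' ∈ (univ : Finset (Fin (n+1))),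
              (0:ℝ) ≤ x k'.succ - x k'.castSucc - rr k' :=
            fun k' _ => sub_nonneg.2 (hrr_le k')
          have hsz : ∑ k' : Fin (n+1), (x k'.succ - x k'.castSucc - rr k') = 0 := by
            rw [Finset.sum_sub_distrib, hsuma, ← hTdef, hT1]
            ring
          have hk := (Finset.sum_eq_zero_iff_of_nonneg hz).1 hsz k (mem_univ k)
          rw [hsplit, hk, zero_mul, add_zero]
          linarith
        · rw [hsplit, div_self (sub_ne_zero.2 fun hc => hT1 (by linarith)), mul_one]
          ring
      have hcol : ∀ l : Fin (m+1), ∑ k : Fin (n+1), q k l = y l.succ - y l.castSucc := by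
        intro l
        have hsplit : ∑ k : Fin (n+1), q k l
            = cc l + (y l.succ - y l.castSucc - cc l) * ((1 - T) / (1 - T)) := by
          rw [hqdef]
          simp only
          rw [Finset.sum_add_distrib]
          have hfac : ∀ k : Fin (n+1),
              (x k.succ - x k.castSucc - rr k) * (y l.succ - y l.castSucc - cc l) / (1 - T)
              = ((y l.succ - y l.castSucc - cc l) / (1 - T)) * (x k.succ - x k.castSucc - rr k) := by
            intro k
            ring
          have h2 : ∑ k : Fin (n+1),
              (x k.succ - x k.castSucc - rr k) * (y l.succ - y l.castSucc - cc l) / (1 - T)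
              = (y l.succ - y l.castSucc - cc l) * ((1 - T) / (1 - T)) := by
            rw [Finset.sum_congr rfl fun k _ => hfac k, ← Finset.mul_sum,
              Finset.sum_sub_distrib, hsuma, ← hTdef]
            ring
          rw [h2]
        by_cases hT1 : T = 1
        · have hz : ∀ l' ∈ (univ : Finset (Fin (m+1))),
              (0:ℝ) ≤ y l'.succ - y l'.castSucc - cc l' :=
            fun l' _ => sub_nonneg.2 (hcc_le l')
          have hsz : ∑ l' : Fin (m+1), (y l'.succ - y l'.castSucc - cc l') = 0 := by
            rw [Finset.sum_sub_distrib, hsumb, ← hT_cc, hT1]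
            ring
          have hl := (Finset.sum_eq_zero_iff_of_nonneg hz).1 hsz l (mem_univ l)
          rw [hsplit, hl, zero_mul, add_zero]
          linarith
        · rw [hsplit, div_self (sub_ne_zero.2 fun hc => hT1 (by linarith)), mul_one]
          ring
      -- marginals of the staircase copula
      have hBx : ∀ i, stairF q i (Fin.last (m+1)) = x i := by
        intro i
        rw [stairF_last_right]
        have ht := teleInd x i
        rw [hx0, sub_zero] at ht
        rw [Finset.sum_congr rfl fun k _ => by rw [hrow k]]
        exact ht.symm
      have hBy : ∀ j, stairF q (Fin.last (n+1)) j = y j := by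
        intro j
        rw [stairF_last_left]
        have ht := teleInd y j
        rw [hy0, sub_zero] at ht
        rw [Finset.sum_congr rfl fun l _ => by rw [hcol l]]
        exact ht.symm
      have hBvolR : ∀ i₁ i₂ j₁ j₂, i₁ ≤ i₂ → j₁ ≤ j₂ → 0 ≤ VolR (stairF q) i₁ i₂ j₁ j₂ := by
        intro i₁ i₂ j₁ j₂ h h'
        rw [stairF_volR]
        refine Finset.sum_nonneg fun k _ => Finset.sum_nonneg fun l _ => ?_
        exact mul_nonneg (mul_nonneg (sub_nonneg.2 (indF_mono h _))
          (sub_nonneg.2 (indF_mono h' _))) (hq0 k l)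
      -- domination: α·V_B ≥ V_Q on all rectangles
      have hdom : ∀ i₁ i₂ j₁ j₂, i₁ ≤ i₂ → j₁ ≤ j₂ →
          VolR Q i₁ i₂ j₁ j₂ ≤ α * VolR (stairF q) i₁ i₂ j₁ j₂ := by
        intro i₁ i₂ j₁ j₂ h h'
        have hrec : ∀ i j, Q i j = stairF (fun k l => Vol Q k l) i j :=
          grounded_eq_stairF Q hQ1 hQ2
        have heq : VolR Q i₁ i₂ j₁ j₂
            = VolR (stairF fun k l => Vol Q k l) i₁ i₂ j₁ j₂ := by
          unfold VolR
          rw [hrec, hrec, hrec, hrec]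
        rw [heq, stairF_volR, stairF_volR, Finset.mul_sum]
        refine Finset.sum_le_sum fun k _ => ?_
        rw [Finset.mul_sum]
        refine Finset.sum_le_sum fun l _ => ?_
        have hd1 : 0 ≤ indF i₂ k - indF i₁ k := sub_nonneg.2 (indF_mono h _)
        have hd2 : 0 ≤ indF j₂ l - indF j₁ l := sub_nonneg.2 (indF_mono h' _)
        have hq_dom : Vol Q k l ≤ α * q k l := by
          have h1 : α * p k l = max (Vol Q k l) 0 := by
            rw [hpdef]
            simp only
            rw [mul_comm, div_mul_cancel₀ _ (ne_of_gt hαpos)]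
          have h2 : α * p k l ≤ α * q k l :=
            mul_le_mul_of_nonneg_left (hq_ge_p k l) hαpos.le
          calc Vol Q k l ≤ max (Vol Q k l) 0 := le_max_left _ _
            _ = α * p k l := h1.symm
            _ ≤ α * q k l := h2
        calc (indF i₂ k - indF i₁ k) * (indF j₂ l - indF j₁ l) * Vol Q k l
            ≤ (indF i₂ k - indF i₁ k) * (indF j₂ l - indF j₁ l) * (α * q k l) :=
              mul_le_mul_of_nonneg_left hq_dom (mul_nonneg hd1 hd2)
          _ = α * ((indF i₂ k - indF i₁ k) * (indF j₂ l - indF j₁ l) * q k l) := by ring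
      refine ⟨α, α - 1, stairF q, fun i j => (α * stairF q i j - Q i j) / (α - 1),
        hαpos.le, by linarith, ?_, ?_, ?_, by ring⟩
      · exact ⟨stairF_zero_right q, stairF_zero_left q, hBx, hBy, hBvolR⟩
      · refine ⟨?_, ?_, ?_, ?_, ?_⟩
        · intro i
          simp only
          rw [stairF_zero_right, hQ1, mul_zero, sub_zero, zero_div]
        · intro j
          simp only
          rw [stairF_zero_left, hQ2, mul_zero, sub_zero, zero_div]
        · intro i
          simp only
          rw [hBx, hQ3, show α * x i - x i = x i * (α - 1) by ring,
            mul_div_assoc, div_self hαne, mul_one]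
        · intro j
          simp only
          rw [hBy, hQ4, show α * y j - y j = y j * (α - 1) by ring,
            mul_div_assoc, div_self hαne, mul_one]
        · intro i₁ i₂ j₁ j₂ h h'
          have heq : VolR (fun i j => (α * stairF q i j - Q i j) / (α - 1)) i₁ i₂ j₁ j₂
              = (α * VolR (stairF q) i₁ i₂ j₁ j₂ - VolR Q i₁ i₂ j₁ j₂) / (α - 1) := by
            unfold VolR
            ring
          rw [heq]
          exact div_nonneg (sub_nonneg.2 (hdom i₁ i₂ j₁ j₂ h h')) (by linarith)
      · intro i j
        simp only
        rw [mul_comm (α - 1), div_mul_cancel₀ _ hαne]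
        ring
  · rintro r ⟨s, t, B, C, hs, ht, ⟨hB1, hB2, hB3, hB4, hB5⟩, ⟨hC1, hC2, hC3, hC4, hC5⟩, hdec, rfl⟩
    have hst : s - t = 1 := by
      have h := hdec (Fin.last (n+1)) (Fin.last (m+1))
      rw [hQ4, hB3, hC3, hy1, hx1] at h
      linarith
    have hVol : ∀ (k : Fin (n+1)) (l : Fin (m+1)),
        Vol Q k l = s * Vol B k l - t * Vol C k l := by
      intro k l
      unfold Vol VolR
      rw [hdec, hdec, hdec, hdec]
      ring
    have hVolB : ∀ (k : Fin (n+1)) (l : Fin (m+1)), 0 ≤ Vol B k l := by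
      intro k l
      exact hB5 _ _ _ _ (Fin.castSucc_lt_succ : k.castSucc < k.succ).le (Fin.castSucc_lt_succ : l.castSucc < l.succ).le
    have hVolC : ∀ (k : Fin (n+1)) (l : Fin (m+1)), 0 ≤ Vol C k l := by
      intro k l
      exact hC5 _ _ _ _ (Fin.castSucc_lt_succ : k.castSucc < k.succ).le (Fin.castSucc_lt_succ : l.castSucc < l.succ).le
    have hmax_le : ∀ (k : Fin (n+1)) (l : Fin (m+1)),
        max (Vol Q k l) 0 ≤ s * Vol B k l := by
      intro k l
      refine max_le ?_ (mul_nonneg hs (hVolB k l))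
      have h0 : 0 ≤ t * Vol C k l := mul_nonneg ht (hVolC k l)
      rw [hVol]
      linarith
    have hsα : α ≤ s := by
      rw [hαdef]
      unfold alphaA
      refine max_le (ciSup_le fun k => ?_) (ciSup_le fun l => ?_)
      · rw [div_le_iff₀ (hax k), stripQpos k]
        have hBstrip : ∑ l : Fin (m+1), Vol B k l = x k.succ - x k.castSucc := by
          rw [← stripSum B hB1 k]
          unfold VolR
          rw [hB3, hB3, hB1, hB1]
          ring
        calc ∑ l : Fin (m+1), max (Vol Q k l) 0
            ≤ ∑ l : Fin (m+1), s * Vol B k l :=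
              Finset.sum_le_sum fun l _ => hmax_le k l
          _ = s * (x k.succ - x k.castSucc) := by rw [← Finset.mul_sum, hBstrip]
      · rw [div_le_iff₀ (hby l), colQpos l]
        have hBcol : ∑ k : Fin (n+1), Vol B k l = y l.succ - y l.castSucc := by
          rw [← colSum B hB2 l]
          unfold VolR
          rw [hB4, hB4, hB2, hB2]
          ring
        calc ∑ k : Fin (n+1), max (Vol Q k l) 0
            ≤ ∑ k : Fin (n+1), s * Vol B k l :=
              Finset.sum_le_sum fun k _ => hmax_le k l
          _ = s * (y l.succ - y l.castSucc) := by rw [← Finset.mul_sum, hBcol]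
    linarith
end

section
/- For every quasi-copula Q on [0,1]² there exist copulas {C_j}_{j=1}^∞ and real numbers {γ_j}_{j=1}^∞ with Σ_{j=1}^∞ γ_j = 1 such that Q(x,y) = Σ_{j=1}^∞ γ_j C_j(x,y) for all x,y ∈ [0,1], where the series converges uniformly on [0,1]². -/
open Set

/-- A bivariate copula (conditions imposed on the unit square). -/
def IsCopula (C : ℝ → ℝ → ℝ) : Prop :=
  (∀ x ∈ Icc (0:ℝ) 1, C x 0 = 0 ∧ C 0 x = 0 ∧ C x 1 = x ∧ C 1 x = x) ∧
  (∀ x₁ ∈ Icc (0:ℝ) 1, ∀ x₂ ∈ Icc (0:ℝ) 1, ∀ y₁ ∈ Icc (0:ℝ) 1, ∀ y₂ ∈ Icc (0:ℝ) 1,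
    x₁ ≤ x₂ → y₁ ≤ y₂ → 0 ≤ C x₂ y₂ - C x₁ y₂ - C x₂ y₁ + C x₁ y₁)

/-- A bivariate quasi-copula (conditions imposed on the unit square). -/
def IsQuasiCopula (Q : ℝ → ℝ → ℝ) : Prop :=
  (∀ x ∈ Icc (0:ℝ) 1, Q x 0 = 0 ∧ Q 0 x = 0 ∧ Q x 1 = x ∧ Q 1 x = x) ∧
  (∀ x₁ ∈ Icc (0:ℝ) 1, ∀ x₂ ∈ Icc (0:ℝ) 1, ∀ y ∈ Icc (0:ℝ) 1,
    x₁ ≤ x₂ → Q x₁ y ≤ Q x₂ y) ∧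
  (∀ x ∈ Icc (0:ℝ) 1, ∀ y₁ ∈ Icc (0:ℝ) 1, ∀ y₂ ∈ Icc (0:ℝ) 1,
    y₁ ≤ y₂ → Q x y₁ ≤ Q x y₂) ∧
  (∀ x₁ ∈ Icc (0:ℝ) 1, ∀ x₂ ∈ Icc (0:ℝ) 1, ∀ y₁ ∈ Icc (0:ℝ) 1, ∀ y₂ ∈ Icc (0:ℝ) 1,
    |Q x₂ y₂ - Q x₁ y₁| ≤ |x₂ - x₁| + |y₂ - y₁|)

/-- Q-volume of the dyadic rectangle R_{ij}^n = [i/2^n,(i+1)/2^n] × [j/2^n,(j+1)/2^n]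
(indices shifted by one with respect to the paper). -/
noncomputable def dyadVol (Q : ℝ → ℝ → ℝ) (n : ℕ) (i j : Fin (2^n)) : ℝ :=
  Q (((i : ℕ) + 1) / 2^n) (((j : ℕ) + 1) / 2^n)
    - Q ((i : ℕ) / 2^n) (((j : ℕ) + 1) / 2^n)
    - Q (((i : ℕ) + 1) / 2^n) ((j : ℕ) / 2^n)
    + Q ((i : ℕ) / 2^n) ((j : ℕ) / 2^n)

/-- The set of all row/column sums of positive parts of dyadic volumes, normalized by
strip width; α_Q is its supremum. -/
noncomputable def alphaSet (Q : ℝ → ℝ → ℝ) : Set ℝ :=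
  {r | ∃ n : ℕ, 1 ≤ n ∧
    ((∃ i : Fin (2^n), r = 2^n * ∑ j : Fin (2^n), max (dyadVol Q n i j) 0) ∨
     (∃ j : Fin (2^n), r = 2^n * ∑ i : Fin (2^n), max (dyadVol Q n i j) 0))}


open Finset

set_option linter.unusedSectionVars false
set_option linter.unusedVariables false


noncomputable def clamp01 (t : ℝ) : ℝ := min (max t 0) 1

lemma clamp01_nonneg (t : ℝ) : 0 ≤ clamp01 t :=
  le_min (le_max_right _ _) one_pos.le

lemma clamp01_le_one (t : ℝ) : clamp01 t ≤ 1 := min_le_right _ _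

lemma clamp01_mono : Monotone clamp01 :=
  fun _ _ h => min_le_min (max_le_max h le_rfl) le_rfl

lemma clamp01_of_nonpos {t : ℝ} (h : t ≤ 0) : clamp01 t = 0 := by
  simp [clamp01, max_eq_right h, min_eq_left, zero_le_one]

lemma clamp01_of_one_le {t : ℝ} (h : 1 ≤ t) : clamp01 t = 1 := by
  have : max t 0 = t := max_eq_left (by linarith)
  simp [clamp01, this, min_eq_right h]

lemma clamp01_of_mem {t : ℝ} (h0 : 0 ≤ t) (h1 : t ≤ 1) : clamp01 t = t := by
  simp [clamp01, max_eq_left h0, min_eq_left h1]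

lemma sum_clamp01 (m : ℕ) (t : ℝ) (h0 : 0 ≤ t) (hm : t ≤ m) :
    ∑ i ∈ range m, clamp01 (t - i) = t := by
  induction m with
  | zero => simp at hm ⊢; linarith
  | succ m ih =>
    rw [Finset.sum_range_succ]
    rcases le_or_gt t m with h | h
    · rw [ih h, clamp01_of_nonpos (by linarith)]
      ring
    · have h1 : ∀ i ∈ range m, clamp01 (t - i) = 1 := by
        intro i hi
        have : (i:ℝ) + 1 ≤ m := by
          have := mem_range.1 hi
          exact_mod_cast Nat.succ_le_of_lt this
        exact clamp01_of_one_le (by linarith)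
      rw [Finset.sum_congr rfl h1, Finset.sum_const, card_range, nsmul_eq_mul, mul_one]
      rw [clamp01_of_mem (by linarith) (by push_cast at hm ⊢; linarith)]
      ring

noncomputable def hat (m i : ℕ) (x : ℝ) : ℝ := clamp01 ((m:ℝ) * x - i)

lemma hat_zero (m i : ℕ) : hat m i 0 = 0 :=
  clamp01_of_nonpos (by simp)

lemma hat_one (m i : ℕ) (h : i < m) : hat m i 1 = 1 :=
  clamp01_of_one_le (by
    have : (i:ℝ) + 1 ≤ m := by exact_mod_cast Nat.succ_le_of_lt h
    linarith)

lemma hat_mono (m i : ℕ) : Monotone (hat m i) := by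
  intro a b h
  exact clamp01_mono (by nlinarith [Nat.cast_nonneg (α := ℝ) m])

lemma hat_nonneg (m i : ℕ) (x : ℝ) : 0 ≤ hat m i x := clamp01_nonneg _
lemma hat_le_one (m i : ℕ) (x : ℝ) : hat m i x ≤ 1 := clamp01_le_one _

lemma hat_sum (m : ℕ) (x : ℝ) (h0 : 0 ≤ x) (h1 : x ≤ 1) :
    ∑ i ∈ range m, hat m i x = m * x := by
  have := sum_clamp01 m ((m:ℝ) * x) (by positivity) (by nlinarith [Nat.cast_nonneg (α := ℝ) m])
  simpa [hat] using this

/-- step shape of hat -/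
lemma hat_step (m : ℕ) (hm : 1 ≤ m) (x : ℝ) (h0 : 0 ≤ x) (h1 : x ≤ 1) :
    ∃ k : ℕ, k < m ∧ ∃ u : ℝ, 0 ≤ u ∧ u ≤ 1 ∧
      (k:ℝ) ≤ m * x ∧ (m:ℝ) * x ≤ k + 1 ∧
      (∀ i : ℕ, hat m i x = if i < k then 1 else if i = k then u else 0) := by
  set k : ℕ := min (⌊(m:ℝ) * x⌋₊) (m - 1) with hk
  have hkm : k < m := lt_of_le_of_lt (min_le_right _ _) (by omega)
  have hfloor : (⌊(m:ℝ) * x⌋₊ : ℝ) ≤ (m:ℝ) * x := Nat.floor_le (by positivity)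
  have hklow : (k:ℝ) ≤ (m:ℝ) * x := by
    refine le_trans ?_ hfloor
    exact_mod_cast min_le_left _ _
  have hkhigh : (m:ℝ) * x ≤ (k:ℝ) + 1 := by
    rcases le_or_gt (⌊(m:ℝ) * x⌋₊) (m-1) with h | h
    · have : k = ⌊(m:ℝ) * x⌋₊ := min_eq_left h
      rw [this]
      exact le_of_lt (Nat.lt_floor_add_one _)
    · have hke : k = m - 1 := min_eq_right (le_of_lt h)
      have : ((m:ℕ):ℝ) * x ≤ m := by nlinarith [Nat.cast_nonneg (α := ℝ) m]
      rw [hke]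
      have : ((m - 1 : ℕ):ℝ) = (m:ℝ) - 1 := by
        have : (1:ℕ) ≤ m := hm
        push_cast [Nat.cast_sub this]
        ring
      rw [this]
      nlinarith [Nat.cast_nonneg (α := ℝ) m]
  refine ⟨k, hkm, (m:ℝ) * x - k, by linarith, by linarith, hklow, hkhigh, ?_⟩
  intro i
  by_cases hik : i < k
  · rw [if_pos hik]
    refine clamp01_of_one_le ?_
    have : (i:ℝ) + 1 ≤ k := by exact_mod_cast Nat.succ_le_of_lt hik
    linarith
  · rw [if_neg hik]
    by_cases hie : i = k
    · rw [if_pos hie, hie]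
      exact clamp01_of_mem (by linarith) (by linarith)
    · rw [if_neg hie]
      have : k + 1 ≤ i := by omega
      have : (k:ℝ) + 1 ≤ i := by exact_mod_cast this
      exact clamp01_of_nonpos (by linarith)

-- checkerboard distribution
noncomputable def cb (m : ℕ) (a : ℕ → ℕ → ℝ) (x y : ℝ) : ℝ :=
  ∑ i ∈ range m, ∑ j ∈ range m, a i j * (hat m i x * hat m j y)

lemma isCopula_cb (m : ℕ) (hm : 1 ≤ m) (a : ℕ → ℕ → ℝ)
    (ha : ∀ i < m, ∀ j < m, 0 ≤ a i j)
    (har : ∀ i < m, ∑ j ∈ range m, a i j = 1 / m)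
    (hac : ∀ j < m, ∑ i ∈ range m, a i j = 1 / m) :
    IsCopula (cb m a) := by
  have hm0 : (m:ℝ) ≠ 0 := by positivity
  constructor
  · intro x hx
    refine ⟨?_, ?_, ?_, ?_⟩
    · simp [cb, hat_zero]
    · simp [cb, hat_zero]
    · have : cb m a x 1 = ∑ i ∈ range m, (1/m : ℝ) * hat m i x := by
        unfold cb
        refine Finset.sum_congr rfl fun i hi => ?_
        rw [← har i (mem_range.1 hi), Finset.sum_mul]
        refine Finset.sum_congr rfl fun j hj => ?_
        rw [hat_one m j (mem_range.1 hj)]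
        ring
      rw [this, ← Finset.mul_sum, hat_sum m x hx.1 hx.2]
      field_simp
    · have : cb m a 1 x = ∑ j ∈ range m, (1/m : ℝ) * hat m j x := by
        unfold cb
        rw [Finset.sum_comm]
        refine Finset.sum_congr rfl fun j hj => ?_
        rw [← hac j (mem_range.1 hj), Finset.sum_mul]
        refine Finset.sum_congr rfl fun i hi => ?_
        rw [hat_one m i (mem_range.1 hi)]
        ring
      rw [this, ← Finset.mul_sum, hat_sum m x hx.1 hx.2]
      field_simp
  · intro x1 _ x2 _ y1 _ y2 _ hx hy
    have key : cb m a x2 y2 - cb m a x1 y2 - cb m a x2 y1 + cb m a x1 y1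
        = ∑ i ∈ range m, ∑ j ∈ range m,
            a i j * ((hat m i x2 - hat m i x1) * (hat m j y2 - hat m j y1)) := by
      unfold cb
      rw [← Finset.sum_sub_distrib, ← Finset.sum_sub_distrib, ← Finset.sum_add_distrib]
      refine Finset.sum_congr rfl fun i _ => ?_
      rw [← Finset.sum_sub_distrib, ← Finset.sum_sub_distrib, ← Finset.sum_add_distrib]
      refine Finset.sum_congr rfl fun j _ => ?_
      ring
    rw [key]
    refine Finset.sum_nonneg fun i hi => Finset.sum_nonneg fun j hj => ?_
    have h1 : 0 ≤ hat m i x2 - hat m i x1 := sub_nonneg.2 (hat_mono m i hx)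
    have h2 : 0 ≤ hat m j y2 - hat m j y1 := sub_nonneg.2 (hat_mono m j hy)
    exact mul_nonneg (ha i (mem_range.1 hi) j (mem_range.1 hj)) (mul_nonneg h1 h2)

-- grid points
noncomputable def gr (m i : ℕ) : ℝ := (i:ℝ) / m

lemma gr_mem {m i : ℕ} (hm : 1 ≤ m) (h : i ≤ m) : gr m i ∈ Icc (0:ℝ) 1 := by
  have hm0 : (0:ℝ) < m := by positivity
  constructor
  · unfold gr; positivity
  · unfold gr
    rw [div_le_one hm0]
    exact_mod_cast h


lemma gr_zero (m : ℕ) : gr m 0 = 0 := by simp [gr]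

lemma gr_last {m : ℕ} (hm : 1 ≤ m) : gr m m = 1 := by
  have hm0 : (m:ℝ) ≠ 0 := by positivity
  simp [gr, hm0]

lemma gr_mono {m : ℕ} (hm : 1 ≤ m) {i j : ℕ} (h : i ≤ j) : gr m i ≤ gr m j := by
  have hm0 : (0:ℝ) < m := by positivity
  unfold gr
  gcongr


lemma gr_succ_sub {m i : ℕ} (hm : 1 ≤ m) : gr m (i+1) - gr m i = 1/m := by
  have hm0 : (m:ℝ) ≠ 0 := by positivity
  unfold gr
  push_cast
  field_simp
  ring

section fixedQ
variable (Q : ℝ → ℝ → ℝ)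

noncomputable def Vm (m i j : ℕ) : ℝ :=
  Q (gr m (i+1)) (gr m (j+1)) - Q (gr m i) (gr m (j+1))
    - Q (gr m (i+1)) (gr m j) + Q (gr m i) (gr m j)

noncomputable def Pm (m i j : ℕ) : ℝ := max (Vm Q m i j) 0
noncomputable def Nm (m i j : ℕ) : ℝ := Pm Q m i j - Vm Q m i j
noncomputable def rowP (m i : ℕ) : ℝ := ∑ j ∈ range m, Pm Q m i j
noncomputable def colP (m j : ℕ) : ℝ := ∑ i ∈ range m, Pm Q m i j
noncomputable def DD (m : ℕ) : ℝ := 2*m - ∑ i ∈ range m, rowP Q m i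
noncomputable def del (m i j : ℕ) : ℝ := (2 - rowP Q m i) * (2 - colP Q m j) / DD Q m
noncomputable def a1 (m i j : ℕ) : ℝ := (Pm Q m i j + del Q m i j) / (2*m)
noncomputable def a2 (m i j : ℕ) : ℝ := (Nm Q m i j + del Q m i j) / (2*m-1)
noncomputable def Qcheck (m : ℕ) (x y : ℝ) : ℝ :=
  ∑ i ∈ range m, ∑ j ∈ range m, Vm Q m i j * (hat m i x * hat m j y)

variable {Q} (hQ : IsQuasiCopula Q)
include hQ

lemma rowV {m i : ℕ} (hm : 1 ≤ m) (hi : i < m) :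
    ∑ j ∈ range m, Vm Q m i j = 1/m := by
  have hstep : ∀ j ∈ range m, Vm Q m i j =
      (fun j => Q (gr m (i+1)) (gr m j) - Q (gr m i) (gr m j)) (j+1)
      - (fun j => Q (gr m (i+1)) (gr m j) - Q (gr m i) (gr m j)) j := by
    intro j _
    simp only [Vm]
    ring
  rw [Finset.sum_congr rfl hstep,
    Finset.sum_range_sub (f := fun j => Q (gr m (i+1)) (gr m j) - Q (gr m i) (gr m j))]
  have hi' : i ≤ m := Nat.le_of_lt hi
  have h1 := (hQ.1 (gr m (i+1)) (gr_mem hm hi)).2.2.1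
  have h2 := (hQ.1 (gr m i) (gr_mem hm hi')).2.2.1
  have h3 := (hQ.1 (gr m (i+1)) (gr_mem hm hi)).1
  have h4 := (hQ.1 (gr m i) (gr_mem hm hi')).1
  simp only [gr_zero, gr_last hm, h1, h2, h3, h4]
  have := gr_succ_sub (m := m) (i := i) hm
  linarith

lemma colV {m j : ℕ} (hm : 1 ≤ m) (hj : j < m) :
    ∑ i ∈ range m, Vm Q m i j = 1/m := by
  have hstep : ∀ i ∈ range m, Vm Q m i j =
      (fun i => Q (gr m i) (gr m (j+1)) - Q (gr m i) (gr m j)) (i+1)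
      - (fun i => Q (gr m i) (gr m (j+1)) - Q (gr m i) (gr m j)) i := by
    intro i _
    simp only [Vm]
    ring
  rw [Finset.sum_congr rfl hstep,
    Finset.sum_range_sub (f := fun i => Q (gr m i) (gr m (j+1)) - Q (gr m i) (gr m j))]
  have hj' : j ≤ m := Nat.le_of_lt hj
  have h1 := (hQ.1 (gr m (j+1)) (gr_mem hm hj)).2.2.2
  have h2 := (hQ.1 (gr m j) (gr_mem hm hj')).2.2.2
  have h3 := (hQ.1 (gr m (j+1)) (gr_mem hm hj)).2.1
  have h4 := (hQ.1 (gr m j) (gr_mem hm hj')).2.1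
  simp only [gr_zero, gr_last hm, h1, h2, h3, h4]
  have := gr_succ_sub (m := m) (i := j) hm
  linarith

lemma Pm_le {m i j : ℕ} (hm : 1 ≤ m) (hi : i < m) (hj : j < m) :
    Pm Q m i j ≤ 1/m := by
  have hm0 : (0:ℝ) < m := by positivity
  have hx1 : gr m i ∈ Icc (0:ℝ) 1 := gr_mem hm (le_of_lt hi)
  have hx2 : gr m (i+1) ∈ Icc (0:ℝ) 1 := gr_mem hm hi
  have hy1 : gr m j ∈ Icc (0:ℝ) 1 := gr_mem hm (le_of_lt hj)
  have hy2 : gr m (j+1) ∈ Icc (0:ℝ) 1 := gr_mem hm hj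
  have hmono := hQ.2.2.1 (gr m i) hx1 (gr m j) hy1 (gr m (j+1)) hy2
    (gr_mono hm (Nat.le_succ j))
  have hlip := hQ.2.2.2 (gr m (i+1)) hx2 (gr m (i+1)) hx2 (gr m j) hy1 (gr m (j+1)) hy2
  rw [sub_self, abs_zero, zero_add] at hlip
  have habs : |gr m (j+1) - gr m j| = 1/m := by
    rw [gr_succ_sub hm, abs_of_nonneg (by positivity)]
  rw [habs] at hlip
  have hV : Vm Q m i j ≤ 1/m := by
    have := abs_le.1 hlip
    simp only [Vm]
    linarith [this.2]
  exact max_le hV (by positivity)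

omit hQ in
lemma Pm_nonneg (m i j : ℕ) : 0 ≤ Pm Q m i j := le_max_right _ _

omit hQ in
lemma Nm_nonneg (m i j : ℕ) : 0 ≤ Nm Q m i j := by
  have : Vm Q m i j ≤ Pm Q m i j := le_max_left _ _
  unfold Nm; linarith

lemma rowP_le_one {m i : ℕ} (hm : 1 ≤ m) (hi : i < m) : rowP Q m i ≤ 1 := by
  have hm0 : (0:ℝ) < m := by positivity
  unfold rowP
  calc ∑ j ∈ range m, Pm Q m i j ≤ ∑ _j ∈ range m, 1/(m:ℝ) :=
        Finset.sum_le_sum fun j hj => Pm_le hQ hm hi (mem_range.1 hj)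
    _ = 1 := by rw [Finset.sum_const, card_range, nsmul_eq_mul]; field_simp

lemma colP_le_one {m j : ℕ} (hm : 1 ≤ m) (hj : j < m) : colP Q m j ≤ 1 := by
  have hm0 : (0:ℝ) < m := by positivity
  unfold colP
  calc ∑ i ∈ range m, Pm Q m i j ≤ ∑ _i ∈ range m, 1/(m:ℝ) :=
        Finset.sum_le_sum fun i hi => Pm_le hQ hm (mem_range.1 hi) hj
    _ = 1 := by rw [Finset.sum_const, card_range, nsmul_eq_mul]; field_simp

lemma DD_pos {m : ℕ} (hm : 1 ≤ m) : 0 < DD Q m := by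
  have hm0 : (0:ℝ) < m := by positivity
  have : ∑ i ∈ range m, rowP Q m i ≤ ∑ _i ∈ range m, (1:ℝ) :=
    Finset.sum_le_sum fun i hi => rowP_le_one hQ hm (mem_range.1 hi)
  rw [Finset.sum_const, card_range, nsmul_eq_mul, mul_one] at this
  unfold DD
  linarith

omit hQ in
lemma sum_dd {m : ℕ} : ∑ i ∈ range m, (2 - rowP Q m i) = DD Q m := by
  rw [Finset.sum_sub_distrib, Finset.sum_const, card_range, nsmul_eq_mul]
  unfold DD
  ring

omit hQ in
lemma sum_ee {m : ℕ} : ∑ j ∈ range m, (2 - colP Q m j) = DD Q m := by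
  rw [Finset.sum_sub_distrib, Finset.sum_const, card_range, nsmul_eq_mul]
  unfold DD colP rowP
  rw [Finset.sum_comm]
  ring

lemma del_nonneg {m i j : ℕ} (hm : 1 ≤ m) (hi : i < m) (hj : j < m) :
    0 ≤ del Q m i j := by
  have h1 := rowP_le_one hQ hm hi
  have h2 := colP_le_one hQ hm hj
  have h3 := DD_pos hQ (m := m) hm
  unfold del
  have : (0:ℝ) ≤ (2 - rowP Q m i) * (2 - colP Q m j) := by nlinarith
  positivity

lemma a1_nonneg {m i j : ℕ} (hm : 1 ≤ m) (hi : i < m) (hj : j < m) :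
    0 ≤ a1 Q m i j := by
  have h1 := Pm_nonneg (Q := Q) m i j
  have h2 := del_nonneg hQ hm hi hj
  have hm0 : (0:ℝ) < m := by positivity
  unfold a1
  exact div_nonneg (add_nonneg h1 h2) (by positivity)

lemma a2_nonneg {m i j : ℕ} (hm : 1 ≤ m) (hi : i < m) (hj : j < m) :
    0 ≤ a2 Q m i j := by
  have h1 := Nm_nonneg (Q := Q) m i j
  have h2 := del_nonneg hQ hm hi hj
  have hm1 : (1:ℝ) ≤ m := by exact_mod_cast hm
  have hd : (0:ℝ) < 2*m - 1 := by linarith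
  unfold a2
  exact div_nonneg (add_nonneg h1 h2) (by positivity)

lemma row_del {m i : ℕ} (hm : 1 ≤ m) : ∑ j ∈ range m, del Q m i j = 2 - rowP Q m i := by
  have h3 := DD_pos hQ (m := m) hm
  unfold del
  rw [← Finset.sum_div, ← Finset.mul_sum, sum_ee]
  field_simp

lemma col_del {m j : ℕ} (hm : 1 ≤ m) : ∑ i ∈ range m, del Q m i j = 2 - colP Q m j := by
  have h3 := DD_pos hQ (m := m) hm
  unfold del
  rw [← Finset.sum_div, ← Finset.sum_mul, sum_dd]
  field_simp

lemma row_a1 {m i : ℕ} (hm : 1 ≤ m) (hi : i < m) :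
    ∑ j ∈ range m, a1 Q m i j = 1/m := by
  have hm0 : (0:ℝ) < m := by positivity
  unfold a1
  rw [← Finset.sum_div, Finset.sum_add_distrib, row_del hQ hm]
  have : ∑ j ∈ range m, Pm Q m i j = rowP Q m i := rfl
  rw [this]
  have h2 : rowP Q m i + (2 - rowP Q m i) = 2 := by ring
  rw [h2]
  field_simp

lemma col_a1 {m j : ℕ} (hm : 1 ≤ m) (hj : j < m) :
    ∑ i ∈ range m, a1 Q m i j = 1/m := by
  have hm0 : (0:ℝ) < m := by positivity
  unfold a1
  rw [← Finset.sum_div, Finset.sum_add_distrib, col_del hQ hm]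
  have : ∑ i ∈ range m, Pm Q m i j = colP Q m j := rfl
  rw [this]
  have h2 : colP Q m j + (2 - colP Q m j) = 2 := by ring
  rw [h2]
  field_simp

lemma row_a2 {m i : ℕ} (hm : 1 ≤ m) (hi : i < m) :
    ∑ j ∈ range m, a2 Q m i j = 1/m := by
  have hm0 : (0:ℝ) < m := by positivity
  have hm1 : (1:ℝ) ≤ m := by exact_mod_cast hm
  have hd : (0:ℝ) < 2*m - 1 := by linarith
  unfold a2
  rw [← Finset.sum_div, Finset.sum_add_distrib, row_del hQ hm]
  have hN : ∑ j ∈ range m, Nm Q m i j = rowP Q m i - 1/m := by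
    unfold Nm
    rw [Finset.sum_sub_distrib, rowV hQ hm hi]
    rfl
  rw [hN]
  rw [div_eq_iff hd.ne', one_div]
  linear_combination (-2) * mul_inv_cancel₀ hm0.ne'

lemma col_a2 {m j : ℕ} (hm : 1 ≤ m) (hj : j < m) :
    ∑ i ∈ range m, a2 Q m i j = 1/m := by
  have hm0 : (0:ℝ) < m := by positivity
  have hm1 : (1:ℝ) ≤ m := by exact_mod_cast hm
  have hd : (0:ℝ) < 2*m - 1 := by linarith
  unfold a2
  rw [← Finset.sum_div, Finset.sum_add_distrib, col_del hQ hm]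
  have hN : ∑ i ∈ range m, Nm Q m i j = colP Q m j - 1/m := by
    unfold Nm
    rw [Finset.sum_sub_distrib, colV hQ hm hj]
    rfl
  rw [hN]
  rw [div_eq_iff hd.ne', one_div]
  linear_combination (-2) * mul_inv_cancel₀ hm0.ne'

omit hQ in
lemma decomp {m : ℕ} (hm : 1 ≤ m) (x y : ℝ) :
    Qcheck Q m x y = 2*m * cb m (a1 Q m) x y - (2*m - 1) * cb m (a2 Q m) x y := by
  have hm0 : (0:ℝ) < m := by positivity
  have hm1 : (1:ℝ) ≤ m := by exact_mod_cast hm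
  have hd : (0:ℝ) < 2*(m:ℝ) - 1 := by linarith
  unfold Qcheck cb
  rw [Finset.mul_sum, Finset.mul_sum, ← Finset.sum_sub_distrib]
  refine Finset.sum_congr rfl fun i _ => ?_
  rw [Finset.mul_sum, Finset.mul_sum, ← Finset.sum_sub_distrib]
  refine Finset.sum_congr rfl fun j _ => ?_
  have h1 : 2*(m:ℝ) * a1 Q m i j = Pm Q m i j + del Q m i j := by
    unfold a1; field_simp
  have h2 : (2*(m:ℝ)-1) * a2 Q m i j = Nm Q m i j + del Q m i j := by
    unfold a2; field_simp
  have key : 2*(m:ℝ) * (a1 Q m i j * (hat m i x * hat m j y))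
      - (2*(m:ℝ)-1) * (a2 Q m i j * (hat m i x * hat m j y))
      = (2*(m:ℝ) * a1 Q m i j - (2*(m:ℝ)-1) * a2 Q m i j) * (hat m i x * hat m j y) := by
    ring
  rw [key, h1, h2]
  unfold Nm
  ring

omit hQ in
lemma step_sum (m k : ℕ) (hk : k < m) (u : ℝ) (G : ℕ → ℝ) :
    ∑ i ∈ range m, (if i < k then (1:ℝ) else if i = k then u else 0) * (G (i+1) - G i)
      = (1-u) * G k + u * G (k+1) - G 0 := by
  have hsub : ∑ i ∈ range m, (if i < k then (1:ℝ) else if i = k then u else 0) * (G (i+1) - G i)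
      = ∑ i ∈ range (k+1), (if i < k then (1:ℝ) else if i = k then u else 0) * (G (i+1) - G i) := by
    refine (Finset.sum_subset (Finset.range_subset_range.2 hk) ?_).symm
    intro i hi hni
    rw [Finset.mem_range] at hi hni
    rw [if_neg (by omega), if_neg (by omega), zero_mul]
  rw [hsub, Finset.sum_range_succ, if_neg (lt_irrefl k), if_pos rfl]
  have hone : ∀ i ∈ range k,
      (if i < k then (1:ℝ) else if i = k then u else 0) * (G (i+1) - G i) = G (i+1) - G i := by
    intro i hi
    rw [if_pos (mem_range.1 hi), one_mul]
  rw [Finset.sum_congr rfl hone, Finset.sum_range_sub]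
  ring

omit hQ in
lemma grid_close {m : ℕ} (hm : 1 ≤ m) {a : ℕ} {t : ℝ}
    (h1 : (a:ℝ) ≤ m*t) (h2 : (m:ℝ)*t ≤ a+1) :
    |gr m a - t| ≤ 1/m ∧ |gr m (a+1) - t| ≤ 1/m := by
  have hm0 : (0:ℝ) < m := by positivity
  have hl : (a:ℝ)/m ≤ t := by rw [div_le_iff₀ hm0]; nlinarith
  have hh : t ≤ ((a:ℝ)+1)/m := by rw [le_div_iff₀ hm0]; nlinarith
  have heq : ((a:ℝ)+1)/m = (a:ℝ)/m + 1/m := by ring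
  have h1m : (0:ℝ) < 1/m := by positivity
  constructor
  · rw [abs_le]
    unfold gr
    constructor <;> linarith
  · rw [abs_le]
    unfold gr
    push_cast
    constructor <;> linarith

set_option maxHeartbeats 1000000 in
lemma Qcheck_close {m : ℕ} (hm : 1 ≤ m) (x y : ℝ)
    (hx : x ∈ Icc (0:ℝ) 1) (hy : y ∈ Icc (0:ℝ) 1) :
    |Qcheck Q m x y - Q x y| ≤ 2/m := by
  have hm0 : (0:ℝ) < m := by positivity
  obtain ⟨k, hk, u, hu0, hu1, hkl, hkh, hhx⟩ := hat_step m hm x hx.1 hx.2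
  obtain ⟨l, hl, v, hv0, hv1, hll, hlh, hhy⟩ := hat_step m hm y hy.1 hy.2
  -- main identity
  have main : Qcheck Q m x y =
      (1-u)*((1-v) * Q (gr m k) (gr m l) + v * Q (gr m k) (gr m (l+1)))
    + u*((1-v) * Q (gr m (k+1)) (gr m l) + v * Q (gr m (k+1)) (gr m (l+1))) := by
    unfold Qcheck
    have inner : ∀ i ∈ range m, ∑ j ∈ range m, Vm Q m i j * (hat m i x * hat m j y)
        = (if i < k then (1:ℝ) else if i = k then u else 0) *
          (((1-v) * Q (gr m (i+1)) (gr m l) + v * Q (gr m (i+1)) (gr m (l+1)))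
           - ((1-v) * Q (gr m i) (gr m l) + v * Q (gr m i) (gr m (l+1)))) := by
      intro i hi
      have hi' := Finset.mem_range.1 hi
      have hstep : ∑ j ∈ range m, (if j < l then (1:ℝ) else if j = l then v else 0) *
          ((Q (gr m (i+1)) (gr m (j+1)) - Q (gr m i) (gr m (j+1)))
            - (Q (gr m (i+1)) (gr m j) - Q (gr m i) (gr m j)))
          = (1-v) * (Q (gr m (i+1)) (gr m l) - Q (gr m i) (gr m l))
            + v * (Q (gr m (i+1)) (gr m (l+1)) - Q (gr m i) (gr m (l+1)))
            - (Q (gr m (i+1)) (gr m 0) - Q (gr m i) (gr m 0)) :=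
        step_sum m l hl v (fun j => Q (gr m (i+1)) (gr m j) - Q (gr m i) (gr m j))
      have split : ∑ j ∈ range m, Vm Q m i j * (hat m i x * hat m j y)
          = hat m i x * ∑ j ∈ range m, (if j < l then (1:ℝ) else if j = l then v else 0) *
              ((Q (gr m (i+1)) (gr m (j+1)) - Q (gr m i) (gr m (j+1)))
                - (Q (gr m (i+1)) (gr m j) - Q (gr m i) (gr m j))) := by
        rw [Finset.mul_sum]
        refine Finset.sum_congr rfl fun j _ => ?_
        rw [hhy j]
        simp only [Vm]
        ring
      rw [split, hstep]
      have hG0 : Q (gr m (i+1)) (gr m 0) - Q (gr m i) (gr m 0) = 0 := by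
        rw [gr_zero, (hQ.1 (gr m (i+1)) (gr_mem hm hi')).1,
          (hQ.1 (gr m i) (gr_mem hm (Nat.le_of_lt hi'))).1]
        ring
      rw [hhx i]
      rw [hG0]
      ring
    rw [Finset.sum_congr rfl inner]
    have outer : ∑ i ∈ range m, (if i < k then (1:ℝ) else if i = k then u else 0) *
        (((1-v) * Q (gr m (i+1)) (gr m l) + v * Q (gr m (i+1)) (gr m (l+1)))
          - ((1-v) * Q (gr m i) (gr m l) + v * Q (gr m i) (gr m (l+1))))
        = (1-u) * ((1-v) * Q (gr m k) (gr m l) + v * Q (gr m k) (gr m (l+1)))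
          + u * ((1-v) * Q (gr m (k+1)) (gr m l) + v * Q (gr m (k+1)) (gr m (l+1)))
          - ((1-v) * Q (gr m 0) (gr m l) + v * Q (gr m 0) (gr m (l+1))) :=
      step_sum m k hk u (fun i => (1-v) * Q (gr m i) (gr m l) + v * Q (gr m i) (gr m (l+1)))
    rw [outer]
    have hPhi0 : (1-v) * Q (gr m 0) (gr m l) + v * Q (gr m 0) (gr m (l+1)) = 0 := by
      rw [gr_zero, (hQ.1 (gr m l) (gr_mem hm (Nat.le_of_lt hl))).2.1,
        (hQ.1 (gr m (l+1)) (gr_mem hm hl)).2.1]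
      ring
    rw [hPhi0]
    ring
  -- corner bounds
  have hxk := grid_close hm hkl hkh
  have hyl := grid_close hm hll hlh
  have corner : ∀ a ≤ m, ∀ b ≤ m, |gr m a - x| ≤ 1/m → |gr m b - y| ≤ 1/m →
      |Q (gr m a) (gr m b) - Q x y| ≤ 2/m := by
    intro a ha b hb h1 h2
    have := hQ.2.2.2 x hx (gr m a) (gr_mem hm ha) y hy (gr m b) (gr_mem hm hb)
    calc |Q (gr m a) (gr m b) - Q x y| ≤ |gr m a - x| + |gr m b - y| := this
      _ ≤ 1/m + 1/m := add_le_add h1 h2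
      _ = 2/m := by ring
  have e1 := corner k (Nat.le_of_lt hk) l (Nat.le_of_lt hl) hxk.1 hyl.1
  have e2 := corner k (Nat.le_of_lt hk) (l+1) hl hxk.1 hyl.2
  have e3 := corner (k+1) hk l (Nat.le_of_lt hl) hxk.2 hyl.1
  have e4 := corner (k+1) hk (l+1) hl hxk.2 hyl.2
  have key : Qcheck Q m x y - Q x y
      = (1-u)*(1-v)*(Q (gr m k) (gr m l) - Q x y)
      + (1-u)*v*(Q (gr m k) (gr m (l+1)) - Q x y)
      + u*(1-v)*(Q (gr m (k+1)) (gr m l) - Q x y)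
      + u*v*(Q (gr m (k+1)) (gr m (l+1)) - Q x y) := by
    rw [main]; ring
  rw [key]
  have w1 : (0:ℝ) ≤ (1-u)*(1-v) := by nlinarith
  have w2 : (0:ℝ) ≤ (1-u)*v := by nlinarith
  have w3 : (0:ℝ) ≤ u*(1-v) := by nlinarith
  have w4 : (0:ℝ) ≤ u*v := by nlinarith
  have habs1 := abs_le.1 e1
  have habs2 := abs_le.1 e2
  have habs3 := abs_le.1 e3
  have habs4 := abs_le.1 e4
  rw [abs_le]
  constructor <;> nlinarith [habs1.1, habs1.2, habs2.1, habs2.2, habs3.1, habs3.2,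
    habs4.1, habs4.2]

end fixedQ


lemma isCopula_cb1 {Q : ℝ → ℝ → ℝ} (hQ : IsQuasiCopula Q) {m : ℕ} (hm : 1 ≤ m) :
    IsCopula (cb m (a1 Q m)) :=
  isCopula_cb m hm (a1 Q m) (fun _ hi _ hj => a1_nonneg hQ hm hi hj)
    (fun _ hi => row_a1 hQ hm hi) (fun _ hj => col_a1 hQ hm hj)

lemma isCopula_cb2 {Q : ℝ → ℝ → ℝ} (hQ : IsQuasiCopula Q) {m : ℕ} (hm : 1 ≤ m) :
    IsCopula (cb m (a2 Q m)) :=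
  isCopula_cb m hm (a2 Q m) (fun _ hi _ hj => a2_nonneg hQ hm hi hj)
    (fun _ hi => row_a2 hQ hm hi) (fun _ hj => col_a2 hQ hm hj)

-- generic copula facts
lemma isCopula_prod : IsCopula (fun x y => x * y) := by
  constructor
  · intro x _
    exact ⟨mul_zero x, zero_mul x, mul_one x, one_mul x⟩
  · intro x1 _ x2 _ y1 _ y2 _ hx hy
    dsimp only
    nlinarith

lemma copula_bounds {C : ℝ → ℝ → ℝ} (hC : IsCopula C) {x y : ℝ}
    (hx : x ∈ Icc (0:ℝ) 1) (hy : y ∈ Icc (0:ℝ) 1) :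
    0 ≤ C x y ∧ C x y ≤ 1 := by
  have h0 : (0:ℝ) ∈ Icc (0:ℝ) 1 := ⟨le_refl 0, zero_le_one⟩
  have h1 : (1:ℝ) ∈ Icc (0:ℝ) 1 := ⟨zero_le_one, le_refl 1⟩
  have hC0y := (hC.1 y hy).2.1
  have hCx0 := (hC.1 x hx).1
  have hC00 := (hC.1 0 h0).1
  have hCx1 := (hC.1 x hx).2.2.1
  have hC01 := (hC.1 1 h1).2.1
  have hlow := hC.2 0 h0 x hx 0 h0 y hy hx.1 hy.1
  have hup := hC.2 0 h0 x hx y hy 1 h1 hx.1 hy.2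
  constructor
  · rw [hC0y, hCx0, hC00] at hlow
    linarith
  · rw [hCx1, hC01, hC0y] at hup
    have := hx.2
    linarith

lemma copula_11 {C : ℝ → ℝ → ℝ} (hC : IsCopula C) : C 1 1 = 1 :=
  (hC.1 1 ⟨zero_le_one, le_refl 1⟩).2.2.1

-- block bookkeeping
def KK (n : ℕ) : ℕ := (n+1)^2
def LL (n : ℕ) : ℕ := 4 * KK n
def stt (n : ℕ) : ℕ := ∑ t ∈ range n, LL t
def blk (j : ℕ) : ℕ := Nat.findGreatest (fun n => stt n ≤ j) j

lemma KK_pos (n : ℕ) : 0 < KK n := pow_pos (Nat.succ_pos n) 2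
lemma LL_pos (n : ℕ) : 0 < LL n := by have := KK_pos n; simp [LL]; omega

lemma stt_succ (n : ℕ) : stt (n+1) = stt n + LL n := Finset.sum_range_succ _ _

lemma le_stt (n : ℕ) : n ≤ stt n := by
  induction n with
  | zero => simp [stt]
  | succ n ih =>
    have := LL_pos n
    rw [stt_succ]
    omega

lemma stt_mono : Monotone stt := by
  intro a b h
  unfold stt
  exact Finset.sum_le_sum_of_subset (Finset.range_subset_range.2 h)

lemma blk_le (j : ℕ) : stt (blk j) ≤ j := by
  have h0 : stt 0 ≤ j := by simp [stt]
  exact Nat.findGreatest_spec (P := fun n => stt n ≤ j) (Nat.zero_le j) h0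

lemma blk_ge {n j : ℕ} (h : stt n ≤ j) : n ≤ blk j :=
  Nat.le_findGreatest (le_trans (le_stt n) h) h

lemma blk_lt (j : ℕ) : j < stt (blk j + 1) := by
  by_contra h
  push_neg at h
  have := blk_ge h
  omega

lemma blk_eq {n j : ℕ} (h1 : stt n ≤ j) (h2 : j < stt (n+1)) : blk j = n := by
  have ha := blk_ge h1
  rcases Nat.lt_or_ge (blk j) (n+1) with h | h
  · omega
  · have := stt_mono h
    have := blk_le j
    omega

-- the sequence
section build
variable (Q : ℝ → ℝ → ℝ)

noncomputable def CC1 (n : ℕ) : ℝ → ℝ → ℝ := if n = 0 then (fun x y => x*y) else cb n (a1 Q n)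
noncomputable def CC2 (n : ℕ) : ℝ → ℝ → ℝ := if n = 0 then (fun x y => x*y) else cb n (a2 Q n)

noncomputable def AA (n : ℕ) : ℝ := if n = 0 then 0 else 2*n
noncomputable def BB (n : ℕ) : ℝ := if n = 0 then 0 else 1 - 2*n

noncomputable def Pfun (n : ℕ) (x y : ℝ) : ℝ := AA n * CC1 Q n x y + BB n * CC2 Q n x y

noncomputable def coefn (n t : ℕ) : ℝ :=
  (if t % 4 = 0 then AA (n+1) else if t % 4 = 1 then BB (n+1)
   else if t % 4 = 2 then -AA n else -BB n) / KK n

noncomputable def copn (n t : ℕ) : ℝ → ℝ → ℝ :=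
  if t % 4 = 0 then CC1 Q (n+1) else if t % 4 = 1 then CC2 Q (n+1)
  else if t % 4 = 2 then CC1 Q n else CC2 Q n

noncomputable def gam (j : ℕ) : ℝ := coefn (blk j) (j - stt (blk j))
noncomputable def cops (j : ℕ) : ℝ → ℝ → ℝ := copn Q (blk j) (j - stt (blk j))

end build

section withQ
variable {Q : ℝ → ℝ → ℝ} (hQ : IsQuasiCopula Q)
include hQ

lemma isCopula_CC1 (n : ℕ) : IsCopula (CC1 Q n) := by
  unfold CC1
  rcases Nat.eq_zero_or_pos n with h | h
  · rw [if_pos h]; exact isCopula_prod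
  · rw [if_neg (by omega)]; exact isCopula_cb1 hQ h

lemma isCopula_CC2 (n : ℕ) : IsCopula (CC2 Q n) := by
  unfold CC2
  rcases Nat.eq_zero_or_pos n with h | h
  · rw [if_pos h]; exact isCopula_prod
  · rw [if_neg (by omega)]; exact isCopula_cb2 hQ h

lemma isCopula_copn (n t : ℕ) : IsCopula (copn Q n t) := by
  unfold copn
  split
  · exact isCopula_CC1 hQ (n+1)
  · split
    · exact isCopula_CC2 hQ (n+1)
    · split
      · exact isCopula_CC1 hQ n
      · exact isCopula_CC2 hQ n

lemma isCopula_cops (j : ℕ) : IsCopula (cops Q j) := isCopula_copn hQ _ _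

lemma Pfun_eq {n : ℕ} (hn : 1 ≤ n) (x y : ℝ) : Pfun Q n x y = Qcheck Q n x y := by
  unfold Pfun AA BB CC1 CC2
  rw [if_neg (by omega), if_neg (by omega), if_neg (by omega), if_neg (by omega),
    decomp (Q := Q) hn x y]
  ring

lemma Pfun_close {n : ℕ} (hn : 1 ≤ n) {x y : ℝ}
    (hx : x ∈ Icc (0:ℝ) 1) (hy : y ∈ Icc (0:ℝ) 1) :
    |Pfun Q n x y - Q x y| ≤ 2/n := by
  rw [Pfun_eq hQ hn]
  exact Qcheck_close hQ hn x y hx hy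

end withQ

lemma AA_abs (n : ℕ) : |AA n| ≤ 2*n := by
  unfold AA
  split
  · simp
  · rw [abs_of_nonneg (by positivity)]

lemma BB_abs (n : ℕ) : |BB n| ≤ 2*n := by
  unfold BB
  split
  · simp
  · next h =>
    have h1 : (1:ℝ) ≤ n := by exact_mod_cast Nat.one_le_iff_ne_zero.2 h
    rw [abs_of_nonpos (by linarith)]
    linarith

lemma coefn_abs (n t : ℕ) : |coefn n t| ≤ 2 / (n+1) := by
  have hK : (KK n : ℝ) = ((n:ℝ)+1)^2 := by unfold KK; push_cast; ring
  have hnum : |if t % 4 = 0 then AA (n+1) else if t % 4 = 1 then BB (n+1)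
      else if t % 4 = 2 then -AA n else -BB n| ≤ 2*((n:ℝ)+1) := by
    have h1 := AA_abs (n+1)
    have h2 := BB_abs (n+1)
    have h3 := AA_abs n
    have h4 := BB_abs n
    push_cast at h1 h2
    split
    · linarith
    · split
      · linarith
      · split
        · rw [abs_neg]; push_cast; linarith
        · rw [abs_neg]; push_cast; linarith
  unfold coefn
  rw [abs_div, hK]
  have hp : (0:ℝ) < ((n:ℝ)+1)^2 := by positivity
  rw [abs_of_nonneg (le_of_lt hp)]
  rw [div_le_div_iff₀ hp (by positivity)]
  nlinarith [hnum]

lemma sum_mod4 (h : ℕ → ℝ) (r : ℕ) :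
    ∑ t ∈ range r, h (t % 4) = ((r / 4 : ℕ) : ℝ) * (h 0 + h 1 + h 2 + h 3)
      + ∑ t ∈ range (r % 4), h t := by
  induction r with
  | zero => simp
  | succ r ih =>
    rw [Finset.sum_range_succ, ih]
    have h4 : r % 4 = 0 ∨ r % 4 = 1 ∨ r % 4 = 2 ∨ r % 4 = 3 := by omega
    rcases h4 with hc | hc | hc | hc
    · have e1 : (r+1)/4 = r/4 := by omega
      have e2 : (r+1)%4 = 1 := by omega
      rw [hc, e1, e2]
      simp [Finset.sum_range_succ]
    · have e1 : (r+1)/4 = r/4 := by omega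
      have e2 : (r+1)%4 = 2 := by omega
      rw [hc, e1, e2]
      simp [Finset.sum_range_succ]
      ring
    · have e1 : (r+1)/4 = r/4 := by omega
      have e2 : (r+1)%4 = 3 := by omega
      rw [hc, e1, e2]
      simp [Finset.sum_range_succ]
      ring
    · have e1 : (r+1)/4 = r/4 + 1 := by omega
      have e2 : (r+1)%4 = 0 := by omega
      rw [hc, e1, e2]
      push_cast
      simp [Finset.sum_range_succ]
      ring

lemma coefn_mod (n t : ℕ) : coefn n t = coefn n (t % 4) := by
  unfold coefn
  rw [Nat.mod_mod_of_dvd t (dvd_refl 4)]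

lemma copn_mod (Q : ℝ → ℝ → ℝ) (n t : ℕ) : copn Q n t = copn Q n (t % 4) := by
  unfold copn
  rw [Nat.mod_mod_of_dvd t (dvd_refl 4)]

lemma S_split (Q : ℝ → ℝ → ℝ) (n : ℕ) {r : ℕ} (hr : r ≤ LL n) (x y : ℝ) :
    ∑ j ∈ range (stt n + r), gam j * cops Q j x y
      = (∑ j ∈ range (stt n), gam j * cops Q j x y)
        + ∑ t ∈ range r, coefn n t * copn Q n t x y := by
  induction r with
  | zero => simp
  | succ r ih =>
    have hr' : r ≤ LL n := by omega
    rw [show stt n + (r+1) = (stt n + r) + 1 from rfl,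
      Finset.sum_range_succ, ih hr', Finset.sum_range_succ]
    have hb : blk (stt n + r) = n := by
      refine blk_eq (Nat.le_add_right _ _) ?_
      rw [stt_succ]
      omega
    unfold gam cops
    rw [hb, Nat.add_sub_cancel_left]
    ring

lemma pkt_eval (Q : ℝ → ℝ → ℝ) (n : ℕ) (x y : ℝ) :
    coefn n 0 * copn Q n 0 x y + coefn n 1 * copn Q n 1 x y
    + coefn n 2 * copn Q n 2 x y + coefn n 3 * copn Q n 3 x y
    = (Pfun Q (n+1) x y - Pfun Q n x y) / KK n := by
  have hKp := KK_pos n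
  have hK : (0:ℝ) < (KK n : ℝ) := by exact_mod_cast hKp
  unfold coefn copn Pfun
  norm_num
  field_simp
  ring

lemma S_stt (Q : ℝ → ℝ → ℝ) (n : ℕ) (x y : ℝ) :
    ∑ j ∈ range (stt n), gam j * cops Q j x y = Pfun Q n x y := by
  induction n with
  | zero => simp [stt, Pfun, AA, BB]
  | succ n ih =>
    rw [stt_succ, S_split Q n (le_refl (LL n)) x y, ih]
    have hKp := KK_pos n
    have hK : (0:ℝ) < (KK n : ℝ) := by exact_mod_cast hKp
    have hrw : ∀ t ∈ range (LL n), coefn n t * copn Q n t x y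
        = (fun s => coefn n s * copn Q n s x y) (t % 4) := by
      intro t _
      rw [coefn_mod, copn_mod]
    rw [Finset.sum_congr rfl hrw, sum_mod4 (fun s => coefn n s * copn Q n s x y) (LL n)]
    have e1 : LL n / 4 = KK n := by unfold LL; omega
    have e2 : LL n % 4 = 0 := by unfold LL; omega
    rw [e1, e2]
    simp only [Finset.range_zero, Finset.sum_empty, add_zero]
    rw [pkt_eval Q n x y]
    field_simp
    ring

lemma S_bound {Q : ℝ → ℝ → ℝ} (hQ : IsQuasiCopula Q) {n : ℕ} (hn : 1 ≤ n) {r : ℕ}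
    (hr : r ≤ LL n) {x y : ℝ} (hx : x ∈ Icc (0:ℝ) 1) (hy : y ∈ Icc (0:ℝ) 1) :
    |∑ j ∈ range (stt n + r), gam j * cops Q j x y - Q x y| ≤ 12 / n := by
  have hn0 : (0:ℝ) < n := by exact_mod_cast hn
  have hKp := KK_pos n
  have hK : (0:ℝ) < (KK n : ℝ) := by exact_mod_cast hKp
  rw [S_split Q n hr, S_stt Q n]
  have hrw : ∀ t ∈ range r, coefn n t * copn Q n t x y
      = (fun s => coefn n s * copn Q n s x y) (t % 4) := by
    intro t _
    rw [coefn_mod, copn_mod]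
  rw [Finset.sum_congr rfl hrw, sum_mod4 (fun s => coefn n s * copn Q n s x y) r,
    pkt_eval Q n x y]
  -- bounds
  have hP1 : |Pfun Q n x y - Q x y| ≤ 2/n := Pfun_close hQ hn hx hy
  have hP2 : |Pfun Q (n+1) x y - Q x y| ≤ 2/((n:ℝ)+1) := by
    have := Pfun_close hQ (n := n+1) (by omega) hx hy
    push_cast at this
    exact this
  have hstep : 2/((n:ℝ)+1) ≤ 2/n := by
    apply div_le_div_of_nonneg_left (by norm_num) hn0
    linarith
  have hdiff : |Pfun Q (n+1) x y - Pfun Q n x y| ≤ 4/n := by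
    have h3 : |Pfun Q (n+1) x y - Pfun Q n x y|
        ≤ |Pfun Q (n+1) x y - Q x y| + |Pfun Q n x y - Q x y| := by
      have he : Pfun Q (n+1) x y - Pfun Q n x y
          = (Pfun Q (n+1) x y - Q x y) - (Pfun Q n x y - Q x y) := by ring
      rw [he]
      exact abs_sub _ _
    calc |Pfun Q (n+1) x y - Pfun Q n x y| ≤ 2/((n:ℝ)+1) + 2/n :=
          le_trans h3 (add_le_add hP2 hP1)
      _ ≤ 2/n + 2/n := by linarith
      _ = 4/n := by ring
  have hq4 : ((r/4 : ℕ) : ℝ) ≤ (KK n : ℝ) := by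
    have : r / 4 ≤ KK n := by unfold LL at hr; omega
    exact_mod_cast this
  have hmid : |((r/4 : ℕ) : ℝ) * ((Pfun Q (n+1) x y - Pfun Q n x y) / KK n)| ≤ 4/n := by
    rw [abs_mul, abs_div, Nat.abs_cast, abs_of_nonneg (le_of_lt hK)]
    calc ((r/4 : ℕ) : ℝ) * (|Pfun Q (n+1) x y - Pfun Q n x y| / KK n)
        ≤ (KK n : ℝ) * ((4/n) / KK n) := by
          apply mul_le_mul hq4 (by gcongr) (by positivity) (le_of_lt hK)
      _ = 4/n := by field_simp
  have hleft : |∑ t ∈ range (r % 4), coefn n t * copn Q n t x y| ≤ 6/n := by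
    have hb : ∀ t ∈ range (r % 4), |coefn n t * copn Q n t x y| ≤ 2/((n:ℝ)+1) := by
      intro t _
      rw [abs_mul]
      have h1 := coefn_abs n t
      have h2 : |copn Q n t x y| ≤ 1 := by
        have hc := copula_bounds (isCopula_copn hQ n t) hx hy
        rw [abs_le]
        constructor <;> linarith [hc.1, hc.2]
      calc |coefn n t| * |copn Q n t x y| ≤ (2/((n:ℝ)+1)) * 1 :=
            mul_le_mul h1 h2 (abs_nonneg _) (by positivity)
        _ = 2/((n:ℝ)+1) := mul_one _
    calc |∑ t ∈ range (r%4), coefn n t * copn Q n t x y|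
        ≤ ∑ t ∈ range (r%4), |coefn n t * copn Q n t x y| := Finset.abs_sum_le_sum_abs _ _
      _ ≤ ∑ _t ∈ range (r%4), 2/((n:ℝ)+1) := Finset.sum_le_sum hb
      _ = ((r%4 : ℕ):ℝ) * (2/((n:ℝ)+1)) := by
          rw [Finset.sum_const, card_range, nsmul_eq_mul]
      _ ≤ 3 * (2/((n:ℝ)+1)) := by
          have h3 : ((r%4 : ℕ):ℝ) ≤ 3 := by exact_mod_cast (by omega : r % 4 ≤ 3)
          exact mul_le_mul_of_nonneg_right h3 (by positivity)
      _ = 6/((n:ℝ)+1) := by ring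
      _ ≤ 6/n := by
          apply div_le_div_of_nonneg_left (by norm_num) hn0
          linarith
  have hsplit : Pfun Q n x y
      + (((r/4 : ℕ) : ℝ) * ((Pfun Q (n+1) x y - Pfun Q n x y) / KK n)
        + ∑ t ∈ range (r % 4), coefn n t * copn Q n t x y) - Q x y
      = (Pfun Q n x y - Q x y)
        + ((r/4 : ℕ) : ℝ) * ((Pfun Q (n+1) x y - Pfun Q n x y) / KK n)
        + ∑ t ∈ range (r % 4), coefn n t * copn Q n t x y := by
    ring
  rw [hsplit]
  calc |(Pfun Q n x y - Q x y)
        + ((r/4 : ℕ) : ℝ) * ((Pfun Q (n+1) x y - Pfun Q n x y) / KK n)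
        + ∑ t ∈ range (r % 4), coefn n t * copn Q n t x y|
      ≤ |(Pfun Q n x y - Q x y)
        + ((r/4 : ℕ) : ℝ) * ((Pfun Q (n+1) x y - Pfun Q n x y) / KK n)|
        + |∑ t ∈ range (r % 4), coefn n t * copn Q n t x y| := abs_add_le _ _
    _ ≤ |Pfun Q n x y - Q x y|
        + |((r/4 : ℕ) : ℝ) * ((Pfun Q (n+1) x y - Pfun Q n x y) / KK n)|
        + |∑ t ∈ range (r % 4), coefn n t * copn Q n t x y| :=
          add_le_add_left (abs_add_le _ _) _
    _ ≤ 2/n + 4/n + 6/n := by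
        refine add_le_add (add_le_add hP1 hmid) hleft
    _ = 12/n := by ring

theorem stmt11 (Q : ℝ → ℝ → ℝ) (hQ : IsQuasiCopula Q) :
    ∃ (C : ℕ → ℝ → ℝ → ℝ) (γ : ℕ → ℝ),
      (∀ j, IsCopula (C j)) ∧
      Filter.Tendsto (fun N => ∑ j ∈ Finset.range N, γ j) Filter.atTop (nhds 1) ∧
      TendstoUniformlyOn
        (fun N (p : ℝ × ℝ) => ∑ j ∈ Finset.range N, γ j * C j p.1 p.2)
        (fun p => Q p.1 p.2) Filter.atTop (Icc (0:ℝ) 1 ×ˢ Icc (0:ℝ) 1) := by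
  have huniform : TendstoUniformlyOn
      (fun N (p : ℝ × ℝ) => ∑ j ∈ Finset.range N, gam j * cops Q j p.1 p.2)
      (fun p => Q p.1 p.2) Filter.atTop (Icc (0:ℝ) 1 ×ˢ Icc (0:ℝ) 1) := by
    rw [Metric.tendstoUniformlyOn_iff]
    intro ε hε
    obtain ⟨n₀, hn₁, hn₂⟩ : ∃ n₀ : ℕ, 1 ≤ n₀ ∧ 12 / (n₀:ℝ) < ε := by
      obtain ⟨n₀, hn₀⟩ := exists_nat_gt (12 / ε)
      refine ⟨n₀ + 1, by omega, ?_⟩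
      have h1 : 12 / ε < (n₀:ℝ) + 1 := by push_cast; linarith
      rw [div_lt_iff₀ hε] at h1
      rw [div_lt_iff₀ (by positivity)]
      push_cast
      nlinarith
    rw [Filter.eventually_atTop]
    refine ⟨stt n₀, fun N hN => ?_⟩
    intro p hp
    have hb : n₀ ≤ blk N := blk_ge hN
    have hn1 : 1 ≤ blk N := le_trans hn₁ hb
    have hle : stt (blk N) ≤ N := blk_le N
    have hltN : N < stt (blk N) + LL (blk N) := by
      have := blk_lt N
      rwa [stt_succ] at this
    have hrr : N - stt (blk N) ≤ LL (blk N) := by omega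
    have hNe : stt (blk N) + (N - stt (blk N)) = N := by omega
    have hband := S_bound hQ hn1 hrr hp.1 hp.2
    rw [hNe] at hband
    rw [Real.dist_eq, abs_sub_comm]
    have hmono : (12:ℝ) / (blk N) ≤ 12 / n₀ := by
      apply div_le_div_of_nonneg_left (by norm_num) (by exact_mod_cast hn₁)
      exact_mod_cast hb
    exact lt_of_le_of_lt (le_trans hband hmono) hn₂
  have hmem : ((1:ℝ), (1:ℝ)) ∈ (Icc (0:ℝ) 1 ×ˢ Icc (0:ℝ) 1) := by
    constructor <;> exact ⟨zero_le_one, le_refl 1⟩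
  have hQ11 : Q 1 1 = 1 := (hQ.1 1 ⟨zero_le_one, le_refl 1⟩).2.2.1
  have ht := huniform.tendsto_at hmem
  have ht2 : Filter.Tendsto (fun N => ∑ j ∈ Finset.range N, gam j * cops Q j 1 1)
      Filter.atTop (nhds 1) := by
    simpa [hQ11] using ht
  have hgam : Filter.Tendsto (fun N => ∑ j ∈ Finset.range N, gam j)
      Filter.atTop (nhds 1) := by
    refine ht2.congr fun N => Finset.sum_congr rfl fun j _ => ?_
    rw [copula_11 (isCopula_cops hQ j), mul_one]
  exact ⟨cops Q, gam, fun j => isCopula_cops hQ j, hgam, huniform⟩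
end
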